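/- arXiv:1908.09252 — 2 statements merged into one kernel-verified Lean document; each statement's English description precedes it below -/
import Mathlib

section
/- Let h ≥ 0, let u : E^N → ℝ be continuous with u ≺ L + h, and let γ : [a,b] → E^N be an h-calibrating curve of u such that the endpoint x₀ = γ(b) is a configuration with collisions (x₀ ∉ Ω). Then there is no Lipschitz function ψ defined on a neighbourhood of x₀ such that ψ ≤ u on that neighbourhood and ψ(x₀) = u(x₀). -/
open MeasureTheory Filter Topology Set
open scoped ENNReal

noncomputable section

namespace NBodyHJ

variable {N : ℕ} {E : Type*} [NormedAddCommGroup E] [InnerProductSpace ℝ E]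

/-- Squared mass norm on the configuration space `Fin N → E`. -/
def msq (m : Fin N → ℝ) (v : Fin N → E) : ℝ := ∑ i, m i * ‖v i‖ ^ 2

/-- Mass norm on the configuration space. -/
def mnorm (m : Fin N → ℝ) (v : Fin N → E) : ℝ := Real.sqrt (msq m v)

/-- The set of collision-free configurations. -/
def Omega : Set (Fin N → E) := {x | ∀ i j : Fin N, i ≠ j → x i ≠ x j}

/-- The set of (ordered) pairs `i < j`. -/
def pairs (N : ℕ) : Finset (Fin N × Fin N) := Finset.univ.filter fun p => p.1 < p.2

/-- The Newtonian potential, real-valued (junk value `0` for the colliding pairs). -/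
def U (m : Fin N → ℝ) (x : Fin N → E) : ℝ :=
  ∑ p ∈ pairs N, m p.1 * m p.2 / dist (x p.1) (x p.2)

/-- The Newtonian potential with value `∞` at collisions. -/
def Upot (m : Fin N → ℝ) (x : Fin N → E) : ℝ≥0∞ :=
  ∑ p ∈ pairs N, ENNReal.ofReal (m p.1 * m p.2) / edist (x p.1) (x p.2)

/-- The Newtonian force acting on body `i`. -/
def force (m : Fin N → ℝ) (x : Fin N → E) (i : Fin N) : E :=
  ∑ j ∈ Finset.univ.erase i, ((m i * m j) / ‖x j - x i‖ ^ 3) • (x j - x i)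

/-- `x`, with velocity `v`, is a collision-free solution of Newton's equations on `s`. -/
def IsMotion (m : Fin N → ℝ) (s : Set ℝ) (x v : ℝ → Fin N → E) : Prop :=
  ∀ t ∈ s, x t ∈ Omega ∧
    (∀ i, HasDerivAt (fun τ => x τ i) (v t i) t) ∧
    (∀ i, HasDerivAt (fun τ => v τ i) ((m i)⁻¹ • force m (x t) i) t)

/-- `f` is absolutely continuous on `[a,b]` with derivative `g`. -/
def IsACOn (f g : ℝ → Fin N → E) (a b : ℝ) : Prop :=
  IntegrableOn g (Set.Icc a b) volume ∧
    ∀ t ∈ Set.Icc a b, f t = f a + ∫ s in a..t, g s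

/-- The Lagrangian action of the curve `f` (with derivative `g`) on `[a,b]`. -/
def actionOn (m : Fin N → ℝ) (f g : ℝ → Fin N → E) (a b : ℝ) : ℝ≥0∞ :=
  ∫⁻ t in Set.Icc a b, (ENNReal.ofReal (2⁻¹ * msq m (g t)) + Upot m (f t))

/-- The action `A_{L+h}`. -/
def actionOnH (m : Fin N → ℝ) (h : ℝ) (f g : ℝ → Fin N → E) (a b : ℝ) : ℝ≥0∞ :=
  actionOn m f g a b + ENNReal.ofReal (h * (b - a))

/-- The fixed-time action potential `φ(x,y,τ)`. -/
def phi (m : Fin N → ℝ) (x y : Fin N → E) (τ : ℝ) : ℝ≥0∞ :=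
  ⨅ (f : ℝ → Fin N → E) (g : ℝ → Fin N → E) (a : ℝ)
    (_ : IsACOn f g a (a + τ) ∧ f a = x ∧ f (a + τ) = y),
    actionOn m f g a (a + τ)

/-- The supercritical action potential `φ_h(x,y)`. -/
def phiH (m : Fin N → ℝ) (h : ℝ) (x y : Fin N → E) : ℝ≥0∞ :=
  ⨅ (τ : ℝ) (_ : 0 < τ), phi m x y τ + ENNReal.ofReal (h * τ)

/-- `u ≺ L + h` : domination of `u` by the action potential. -/
def Dominated (m : Fin N → ℝ) (h : ℝ) (u : (Fin N → E) → ℝ) : Prop :=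
  ∀ x y : Fin N → E, ENNReal.ofReal (u y - u x) ≤ phiH m h x y

/-- `H(x,p) ≤ h`, expressed through the Fenchel inequality. -/
def HamLe (m : Fin N → ℝ) (x : Fin N → E) (p : (Fin N → E) →L[ℝ] ℝ) (h : ℝ) : Prop :=
  ∀ v : Fin N → E, p v - (2⁻¹ * msq m v + U m x) ≤ h

/-- `H(x,p) ≥ h`, expressed through the Fenchel (in)equality `H(x,p) = sup_v (p v - L(x,v))`. -/
def HamGe (m : Fin N → ℝ) (x : Fin N → E) (p : (Fin N → E) →L[ℝ] ℝ) (h : ℝ) : Prop :=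
  ∀ ε : ℝ, 0 < ε → ∃ v : Fin N → E, h - ε ≤ p v - (2⁻¹ * msq m v + U m x)

/-- Viscosity subsolutions of `H(x,d_xu) = h`. -/
def IsViscSubsol (m : Fin N → ℝ) (h : ℝ) (u : (Fin N → E) → ℝ) : Prop :=
  ∀ ψ : (Fin N → E) → ℝ, ContDiff ℝ 1 ψ →
    ∀ x₀ : Fin N → E, IsLocalMax (fun x => u x - ψ x) x₀ → HamLe m x₀ (fderiv ℝ ψ x₀) h

/-- Viscosity supersolutions of `H(x,d_xu) = h`. -/
def IsViscSupersol (m : Fin N → ℝ) (h : ℝ) (u : (Fin N → E) → ℝ) : Prop :=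
  ∀ ψ : (Fin N → E) → ℝ, ContDiff ℝ 1 ψ →
    ∀ x₀ : Fin N → E, IsLocalMin (fun x => u x - ψ x) x₀ → HamGe m x₀ (fderiv ℝ ψ x₀) h

/-- The Lax–Oleinik semigroup `T_t`. -/
def LOt (m : Fin N → ℝ) (t : ℝ) (u : (Fin N → E) → ℝ) (x : Fin N → E) : ℝ :=
  if t ≤ 0 then u x else ⨅ y : Fin N → E, (u y + (phi m y x t).toReal)

/-- Horofunctions: elements of the ideal boundary `B_h`. -/
def IsHoro (m : Fin N → ℝ) (h : ℝ) (u : (Fin N → E) → ℝ) : Prop :=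
  Continuous u ∧ ∃ p : ℕ → Fin N → E,
    Tendsto (fun n => mnorm m (p n)) atTop atTop ∧
    ∀ x, Tendsto
      (fun n => (phiH m h x (p n)).toReal - (phiH m h (0 : Fin N → E) (p n)).toReal)
      atTop (nhds (u x))

/-- Horofunctions directed by the configuration `a`: elements of `B_h(a)`. -/
def IsHoroDir (m : Fin N → ℝ) (h : ℝ) (a : Fin N → E) (u : (Fin N → E) → ℝ) : Prop :=
  Continuous u ∧ ∃ (p : ℕ → Fin N → E) (lam : ℕ → ℝ),
    Tendsto lam atTop atTop ∧
    Tendsto (fun n => (lam n)⁻¹ • p n) atTop (nhds a) ∧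
    ∀ x, Tendsto
      (fun n => (phiH m h x (p n)).toReal - (phiH m h (0 : Fin N → E) (p n)).toReal)
      atTop (nhds (u x))

/-- Piecewise `C¹` curves on `[a,b]`. -/
def PiecewiseC1On (γ : ℝ → Fin N → E) (a b : ℝ) : Prop :=
  ContinuousOn γ (Set.Icc a b) ∧
    ∃ (n : ℕ) (t : Fin (n + 1) → ℝ), Monotone t ∧ t 0 = a ∧ t (Fin.last n) = b ∧
      ∀ i : Fin n, ContDiffOn ℝ 1 γ (Set.Icc (t i.castSucc) (t i.succ))

/-- The Jacobi–Maupertuis length of a curve. -/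
def jmLength (m : Fin N → ℝ) (h : ℝ) (γ : ℝ → Fin N → E) (a b : ℝ) : ℝ :=
  ∫ t in a..b, Real.sqrt (2 * (h + U m (γ t))) * mnorm m (deriv γ t)

/-- The Riemannian distance `d_h` of the Jacobi–Maupertuis metric on `Ω`. -/
def jmDist (m : Fin N → ℝ) (h : ℝ) (x y : Fin N → E) : ℝ :=
  sInf {r : ℝ | ∃ (γ : ℝ → Fin N → E) (a b : ℝ), a ≤ b ∧ PiecewiseC1On γ a b ∧
    (∀ t ∈ Set.Icc a b, γ t ∈ Omega) ∧ γ a = x ∧ γ b = y ∧ r = jmLength m h γ a b}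

/- Auxiliary lemmas -/

lemma msq_nonneg {m : Fin N → ℝ} (hm : ∀ i, 0 ≤ m i) (v : Fin N → E) : 0 ≤ msq m v :=
  Finset.sum_nonneg fun i _ => mul_nonneg (hm i) (sq_nonneg _)

lemma norm_apply_le_mnorm {m : Fin N → ℝ} (hm : ∀ i, 0 < m i) (v : Fin N → E) (k : Fin N) :
    ‖v k‖ ≤ (Real.sqrt (m k))⁻¹ * mnorm m v := by
  have h1 : m k * ‖v k‖ ^ 2 ≤ msq m v :=
    Finset.single_le_sum (f := fun l => m l * ‖v l‖ ^ 2)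
      (fun l _ => mul_nonneg (hm l).le (sq_nonneg _)) (Finset.mem_univ k)
  have h2 : Real.sqrt (m k) * ‖v k‖ ≤ mnorm m v := by
    rw [mnorm, show Real.sqrt (m k) * ‖v k‖ = Real.sqrt (m k * ‖v k‖ ^ 2) by
      rw [Real.sqrt_mul (hm k).le, Real.sqrt_sq (norm_nonneg _)]]
    exact Real.sqrt_le_sqrt h1
  have h3 : 0 < Real.sqrt (m k) := Real.sqrt_pos.2 (hm k)
  rw [inv_mul_eq_div, le_div_iff₀ h3]
  linarith

lemma mnorm_le_norm {m : Fin N → ℝ} (hm : ∀ i, 0 ≤ m i) (v : Fin N → E) :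
    mnorm m v ≤ Real.sqrt (∑ k, m k) * ‖v‖ := by
  rw [mnorm, show Real.sqrt (∑ k, m k) * ‖v‖ = Real.sqrt ((∑ k, m k) * ‖v‖ ^ 2) by
      rw [Real.sqrt_mul (Finset.sum_nonneg fun k _ => hm k), Real.sqrt_sq (norm_nonneg _)]]
  apply Real.sqrt_le_sqrt
  rw [msq, Finset.sum_mul]
  apply Finset.sum_le_sum
  intro k _
  exact mul_le_mul_of_nonneg_left
    (pow_le_pow_left₀ (norm_nonneg _) (norm_le_pi_norm v k) 2) (hm k)

lemma mnorm_nonneg (m : Fin N → ℝ) (v : Fin N → E) : 0 ≤ mnorm m v := Real.sqrt_nonneg _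

lemma continuous_mnorm (m : Fin N → ℝ) : Continuous (mnorm m : (Fin N → E) → ℝ) := by
  have : Continuous (msq m : (Fin N → E) → ℝ) :=
    continuous_finset_sum _ fun i _ =>
      continuous_const.mul (((continuous_apply i).norm).pow 2)
  exact Real.continuous_sqrt.comp this

lemma amgm {q e : ℝ} (hq : 0 ≤ q) (he : 0 ≤ e) :
    Real.sqrt (2 * e) * Real.sqrt q ≤ 2⁻¹ * q + e := by
  nlinarith [sq_nonneg (Real.sqrt (2 * e) - Real.sqrt q),
    Real.sq_sqrt (by linarith : (0:ℝ) ≤ 2 * e), Real.sq_sqrt hq,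
    Real.sqrt_nonneg (2 * e), Real.sqrt_nonneg q]
/- STATEMENT 10 -/
set_option maxHeartbeats 1000000 in
theorem stmt10
    {E : Type*} [NormedAddCommGroup E] [InnerProductSpace ℝ E] [FiniteDimensional ℝ E]
    {N : ℕ} (hN : 2 ≤ N) (m : Fin N → ℝ) (hm : ∀ i, 0 < m i)
    (h : ℝ) (hh : 0 ≤ h) (u : (Fin N → E) → ℝ)
    (hu : Continuous u) (hdom : Dominated m h u)
    (f g : ℝ → Fin N → E) (a b : ℝ) (hab : a < b)
    (hac : IsACOn f g a b)
    (hcal : actionOnH m h f g a b ≠ ⊤ ∧ (actionOnH m h f g a b).toReal = u (f b) - u (f a))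
    (hcol : f b ∉ Omega) :
    ¬ ∃ (ψ : (Fin N → E) → ℝ) (s : Set (Fin N → E)) (K : NNReal),
        s ∈ nhds (f b) ∧ LipschitzOnWith K ψ s ∧ (∀ z ∈ s, ψ z ≤ u z) ∧ ψ (f b) = u (f b) := by
  rintro ⟨ψ, s, K, hs, hK, hψle, hψeq⟩
  -- a colliding pair i < j at the endpoint
  obtain ⟨i, j, hij, hcij⟩ : ∃ i j : Fin N, i < j ∧ f b i = f b j := by
    by_contra hc
    push_neg at hc
    apply hcol
    intro i j hne heq
    rcases hne.lt_or_gt with hlt | hlt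
    · exact hc i j hlt heq
    · exact hc j i hlt heq.symm
  have hsm : ∀ k : Fin N, 0 < Real.sqrt (m k) := fun k => Real.sqrt_pos.2 (hm k)
  -- constants
  set c3 : ℝ := (Real.sqrt (m i))⁻¹ + (Real.sqrt (m j))⁻¹ with hc3def
  have hc3 : 0 < c3 := add_pos (inv_pos.2 (hsm i)) (inv_pos.2 (hsm j))
  set c4 : ℝ := m i * m j / c3 with hc4def
  have hc4 : 0 < c4 := div_pos (mul_pos (hm i) (hm j)) hc3
  set c5 : ℝ := Real.sqrt (2 * c4) with hc5def
  have hc5 : 0 < c5 := Real.sqrt_pos.2 (by linarith)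
  set c6 : ℝ := ∑ k, (Real.sqrt (m k))⁻¹ with hc6def
  have hc6 : 0 < c6 := Finset.sum_pos (fun k _ => inv_pos.2 (hsm k)) ⟨i, Finset.mem_univ i⟩
  have hc6i : ∀ k : Fin N, (Real.sqrt (m k))⁻¹ ≤ c6 := fun k =>
    Finset.single_le_sum (fun l _ => (inv_pos.2 (hsm l)).le) (Finset.mem_univ k)
  obtain ⟨r, hr, hball⟩ := Metric.mem_nhds_iff.1 hs
  -- integrability facts
  have hgInt : IntegrableOn g (Set.Icc a b) volume := hac.1
  have hmnInt : IntegrableOn (fun σ => mnorm m (g σ)) (Set.Icc a b) volume := by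
    refine Integrable.mono (hgInt.norm.const_mul (Real.sqrt (∑ k, m k)))
      ((continuous_mnorm m).comp_aestronglyMeasurable hgInt.aestronglyMeasurable) ?_
    filter_upwards with σ
    rw [Real.norm_of_nonneg (mnorm_nonneg m (g σ))]
    calc mnorm m (g σ) ≤ Real.sqrt (∑ k, m k) * ‖g σ‖ := mnorm_le_norm (fun k => (hm k).le) _
      _ ≤ ‖Real.sqrt (∑ k, m k) * ‖g σ‖‖ := le_abs_self _
  set M : ℝ → ℝ := fun t => ∫ σ in t..b, mnorm m (g σ) with hMdef
  have hmnII : ∀ t ∈ Set.Icc a b, ∀ t' ∈ Set.Icc a b, t ≤ t' →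
      IntervalIntegrable (fun σ => mnorm m (g σ)) volume t t' := by
    intro t ht t' ht' htt'
    apply IntegrableOn.intervalIntegrable
    rw [Set.uIcc_of_le htt']
    exact hmnInt.mono_set (Set.Icc_subset_Icc ht.1 ht'.2)
  have hgII : ∀ t ∈ Set.Icc a b, ∀ t' ∈ Set.Icc a b, t ≤ t' →
      IntervalIntegrable g volume t t' := by
    intro t ht t' ht' htt'
    apply IntegrableOn.intervalIntegrable
    rw [Set.uIcc_of_le htt']
    exact hgInt.mono_set (Set.Icc_subset_Icc ht.1 ht'.2)
  have haib : a ∈ Set.Icc a b := ⟨le_rfl, hab.le⟩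
  have hbib : b ∈ Set.Icc a b := ⟨hab.le, le_rfl⟩
  -- M basic properties
  have hM0 : ∀ t ∈ Set.Icc a b, 0 ≤ M t := fun t ht =>
    intervalIntegral.integral_nonneg ht.2 (fun σ _ => mnorm_nonneg m (g σ))
  have hMmono : ∀ t ∈ Set.Icc a b, ∀ t' ∈ Set.Icc a b, t ≤ t' → M t' ≤ M t := by
    intro t ht t' ht' htt'
    have h1 : M t - (∫ σ in t..t', mnorm m (g σ)) = M t' :=
      intervalIntegral.integral_interval_sub_left (hmnII t ht b hbib ht.2) (hmnII t ht t' ht' htt')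
    have h2 : 0 ≤ ∫ σ in t..t', mnorm m (g σ) :=
      intervalIntegral.integral_nonneg htt' (fun σ _ => mnorm_nonneg m (g σ))
    linarith
  -- component estimate: ‖f b k - f t k‖ ≤ (√ m k)⁻¹ * M t
  have hF3 : ∀ t ∈ Set.Icc a b, ∀ k : Fin N, ‖f b k - f t k‖ ≤ (Real.sqrt (m k))⁻¹ * M t := by
    intro t ht k
    have hsub : f b - f t = ∫ σ in t..b, g σ := by
      rw [hac.2 b hbib, hac.2 t ht]
      have := intervalIntegral.integral_interval_sub_left (hgII a haib b hbib hab.le)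
        (hgII a haib t ht ht.1)
      rw [← this]; abel
    have happ : f b k - f t k = ∫ σ in t..b, g σ k := by
      have h1 : (f b - f t) k = f b k - f t k := rfl
      rw [← h1, hsub]
      have := (ContinuousLinearMap.proj (R := ℝ) (φ := fun _ : Fin N => E) k).intervalIntegral_comp_comm
        (hgII t ht b hbib ht.2)
      exact this.symm
    rw [happ]
    calc ‖∫ σ in t..b, g σ k‖ ≤ ∫ σ in t..b, ‖g σ k‖ :=
          intervalIntegral.norm_integral_le_integral_norm ht.2
      _ ≤ ∫ σ in t..b, (Real.sqrt (m k))⁻¹ * mnorm m (g σ) := by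
          apply intervalIntegral.integral_mono_on ht.2
          · apply IntervalIntegrable.norm
            apply IntegrableOn.intervalIntegrable
            rw [Set.uIcc_of_le ht.2]
            exact (ContinuousLinearMap.proj (R := ℝ) (φ := fun _ : Fin N => E) k).integrable_comp
              (hgInt.mono_set (Set.Icc_subset_Icc ht.1 le_rfl))
          · exact (hmnII t ht b hbib ht.2).const_mul _
          · exact fun σ _ => by
              simpa using norm_apply_le_mnorm hm (g σ) k
      _ = (Real.sqrt (m k))⁻¹ * M t := intervalIntegral.integral_const_mul _ _
  -- pair distance estimate
  have hF5 : ∀ t ∈ Set.Icc a b, dist (f t i) (f t j) ≤ c3 * M t := by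
    intro t ht
    have h1 : f t i - f t j = (f b j - f t j) - (f b i - f t i) := by
      rw [hcij]; abel
    rw [dist_eq_norm, h1]
    calc ‖(f b j - f t j) - (f b i - f t i)‖ ≤ ‖f b j - f t j‖ + ‖f b i - f t i‖ := norm_sub_le _ _
      _ ≤ (Real.sqrt (m j))⁻¹ * M t + (Real.sqrt (m i))⁻¹ * M t := by
          have := hF3 t ht j; have := hF3 t ht i; linarith [hF3 t ht j, hF3 t ht i]
      _ = c3 * M t := by rw [hc3def]; ring
  -- full distance estimate
  have hF4 : ∀ t ∈ Set.Icc a b, dist (f t) (f b) ≤ c6 * M t := by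
    intro t ht
    rw [dist_pi_le_iff (mul_nonneg hc6.le (hM0 t ht))]
    intro k
    rw [dist_eq_norm, ← norm_neg, neg_sub]
    calc ‖f b k - f t k‖ ≤ (Real.sqrt (m k))⁻¹ * M t := hF3 t ht k
      _ ≤ c6 * M t := mul_le_mul_of_nonneg_right (hc6i k) (hM0 t ht)
  -- action finiteness
  have hAfin : actionOn m f g a b ≠ ⊤ := by
    intro hT
    exact hcal.1 (by simp [actionOnH, hT])
  have hAsub : ∀ t, actionOn m f g t b ≤ actionOn m f g a b → True := fun _ _ => trivial
  -- Upot lower bound via the (i,j) term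
  have hpair : (i, j) ∈ pairs N := by simp [pairs, hij]
  have hUpot_ge : ∀ x : Fin N → E,
      ENNReal.ofReal (m i * m j) / edist (x i) (x j) ≤ Upot m x := fun x =>
    Finset.single_le_sum (f := fun p => ENNReal.ofReal (m p.1 * m p.2) / edist (x p.1) (x p.2))
      (fun p _ => zero_le) hpair
  -- monotonicity of the action in the initial time
  have hAmono : ∀ t, a ≤ t → actionOn m f g t b ≤ actionOn m f g a b := by
    intro t hta
    exact lintegral_mono' (Measure.restrict_mono (Set.Icc_subset_Icc hta le_rfl) le_rfl) le_rfl
  -- if M t = 0 with t < b, the action is infinite: contradiction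
  have hKEY0 : ∀ t ∈ Set.Ico a b, M t = 0 → False := by
    intro t ht hMt
    have hUtop : ∀ τ ∈ Set.Icc t b,
        (ENNReal.ofReal (2⁻¹ * msq m (g τ)) + Upot m (f τ)) = ⊤ := by
      intro τ hτ
      have hτab : τ ∈ Set.Icc a b := ⟨ht.1.trans hτ.1, hτ.2⟩
      have hd : dist (f τ i) (f τ j) ≤ 0 := by
        calc dist (f τ i) (f τ j) ≤ c3 * M τ := hF5 τ hτab
          _ ≤ c3 * M t :=
              mul_le_mul_of_nonneg_left (hMmono t ⟨ht.1, ht.2.le⟩ τ hτab hτ.1) hc3.le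
          _ = 0 := by rw [hMt, mul_zero]
      have heq : f τ i = f τ j := dist_le_zero.1 hd
      have hterm : ENNReal.ofReal (m i * m j) / edist (f τ i) (f τ j) = ⊤ := by
        rw [heq, edist_self, ENNReal.div_zero]
        exact (ENNReal.ofReal_pos.2 (mul_pos (hm i) (hm j))).ne'
      have hU : Upot m (f τ) = ⊤ := top_le_iff.1 (hterm ▸ hUpot_ge (f τ))
      rw [hU]; simp
    have htop : (⊤ : ℝ≥0∞) ≤ actionOn m f g t b := by
      have h1 : ∫⁻ _ in Set.Icc t b, (⊤:ℝ≥0∞) ∂volume ≤ actionOn m f g t b := by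
        rw [actionOn]
        refine lintegral_mono_ae ?_
        filter_upwards [ae_restrict_mem measurableSet_Icc] with τ hτ
        rw [hUtop τ hτ]
      have h2 : ∫⁻ _ in Set.Icc t b, (⊤:ℝ≥0∞) ∂volume = ⊤ := by
        rw [setLIntegral_const, Real.volume_Icc,
          ENNReal.top_mul (ENNReal.ofReal_pos.2 (by linarith [ht.2]) |>.ne')]
      exact h2 ▸ h1
    exact hAfin (top_le_iff.1 (htop.trans (hAmono t ht.1)))
  -- lower bound on the action when M t > 0
  have hKEY1 : ∀ t ∈ Set.Ico a b, 0 < M t →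
      ENNReal.ofReal (c5 * Real.sqrt (M t)) ≤ actionOn m f g t b := by
    intro t ht hMt
    have htb : Set.Icc t b ⊆ Set.Icc a b := Set.Icc_subset_Icc ht.1 le_rfl
    have hpt : ∀ τ ∈ Set.Icc t b,
        ENNReal.ofReal (c5 / Real.sqrt (M t) * mnorm m (g τ)) ≤
          ENNReal.ofReal (2⁻¹ * msq m (g τ)) + Upot m (f τ) := by
      intro τ hτ
      have hτab : τ ∈ Set.Icc a b := htb hτ
      have hd : dist (f τ i) (f τ j) ≤ c3 * M t :=
        (hF5 τ hτab).trans
          (mul_le_mul_of_nonneg_left (hMmono t ⟨ht.1, ht.2.le⟩ τ hτab hτ.1) hc3.le)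
      have h1 : ENNReal.ofReal (c4 / M t)
          ≤ ENNReal.ofReal (m i * m j) / edist (f τ i) (f τ j) := by
        rw [edist_dist]
        have h2 : ENNReal.ofReal (c4 / M t)
            = ENNReal.ofReal (m i * m j) / ENNReal.ofReal (c3 * M t) := by
          rw [← ENNReal.ofReal_div_of_pos (mul_pos hc3 hMt)]
          congr 1
          rw [hc4def]
          field_simp
        rw [h2]
        exact ENNReal.div_le_div_left (ENNReal.ofReal_le_ofReal hd) _
      have h3 : c5 / Real.sqrt (M t) * mnorm m (g τ) ≤ 2⁻¹ * msq m (g τ) + c4 / M t := by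
        have e1 : Real.sqrt (2 * (c4 / M t)) = c5 / Real.sqrt (M t) := by
          rw [← mul_div_assoc, Real.sqrt_div (by linarith : (0:ℝ) ≤ 2 * c4), hc5def]
        rw [← e1, mnorm]
        exact amgm (msq_nonneg (fun k => (hm k).le) _) (div_nonneg hc4.le hMt.le)
      calc ENNReal.ofReal (c5 / Real.sqrt (M t) * mnorm m (g τ))
          ≤ ENNReal.ofReal (2⁻¹ * msq m (g τ) + c4 / M t) := ENNReal.ofReal_le_ofReal h3
        _ = ENNReal.ofReal (2⁻¹ * msq m (g τ)) + ENNReal.ofReal (c4 / M t) :=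
            ENNReal.ofReal_add (mul_nonneg (by norm_num) (msq_nonneg (fun k => (hm k).le) _))
              (div_nonneg hc4.le hMt.le)
        _ ≤ ENNReal.ofReal (2⁻¹ * msq m (g τ)) + Upot m (f τ) :=
            add_le_add_right (h1.trans (hUpot_ge (f τ))) _
    have hint : ∫⁻ τ in Set.Icc t b,
        ENNReal.ofReal (c5 / Real.sqrt (M t) * mnorm m (g τ)) ∂volume
        ≤ actionOn m f g t b := by
      rw [actionOn]
      refine lintegral_mono_ae ?_
      filter_upwards [ae_restrict_mem measurableSet_Icc] with τ hτ using hpt τ hτ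
    refine le_trans (le_of_eq ?_) hint
    have e2 : ∀ τ : ℝ, ENNReal.ofReal (c5 / Real.sqrt (M t) * mnorm m (g τ)) =
        ENNReal.ofReal (c5 / Real.sqrt (M t)) * ENNReal.ofReal (mnorm m (g τ)) := fun τ =>
      ENNReal.ofReal_mul (by positivity)
    simp_rw [e2]
    rw [lintegral_const_mul' _ _ ENNReal.ofReal_ne_top]
    have e3 : ∫⁻ τ in Set.Icc t b, ENNReal.ofReal (mnorm m (g τ)) ∂volume
        = ENNReal.ofReal (M t) := by
      rw [← MeasureTheory.ofReal_integral_eq_lintegral_ofReal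
        (hmnInt.mono_set (Set.Icc_subset_Icc ht.1 le_rfl))
        (Filter.Eventually.of_forall fun τ => mnorm_nonneg m (g τ))]
      congr 1
      show (∫ τ in Set.Icc t b, mnorm m (g τ)) = ∫ σ in t..b, mnorm m (g σ)
      rw [intervalIntegral.integral_of_le ht.2.le]
      exact MeasureTheory.integral_Icc_eq_integral_Ioc
    rw [e3, ← ENNReal.ofReal_mul (by positivity)]
    congr 1
    rw [div_mul_eq_mul_div, mul_div_assoc, Real.div_sqrt]
  -- splitting of the action at time t
  have hsplitfun : ∀ t ∈ Set.Ioo a b,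
      actionOn m f g a b = actionOn m f g a t + actionOn m f g t b := by
    intro t ht
    have h1 : actionOn m f g t b = ∫⁻ τ in Set.Ioc t b,
        (ENNReal.ofReal (2⁻¹ * msq m (g τ)) + Upot m (f τ)) ∂volume := by
      rw [actionOn]
      exact (setLIntegral_congr MeasureTheory.Ioc_ae_eq_Icc).symm
    have hdisj : Disjoint (Set.Icc a t) (Set.Ioc t b) :=
      Set.disjoint_left.mpr fun x hx hx' => absurd hx.2 (not_le.2 hx'.1)
    rw [actionOn, actionOn, h1, ← Set.Icc_union_Ioc_eq_Icc ht.1.le ht.2.le,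
      lintegral_union measurableSet_Ioc hdisj]
  -- domination: the action on [t,b] is at most the increment of u
  have hdomt : ∀ t ∈ Set.Ioo a b, (actionOn m f g t b).toReal ≤ u (f b) - u (f t) := by
    intro t ht
    have hsplit := hsplitfun t ht
    have hAat : actionOn m f g a t ≠ ⊤ := fun hT =>
      hAfin (by rw [hsplit, hT]; simp)
    have hAtb : actionOn m f g t b ≠ ⊤ := fun hT =>
      hAfin (by rw [hsplit, hT]; simp)
    have hACat : IsACOn f g a t :=
      ⟨hgInt.mono_set (Set.Icc_subset_Icc le_rfl ht.2.le),
       fun τ hτ => hac.2 τ ⟨hτ.1, hτ.2.trans ht.2.le⟩⟩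
    have hphi : phi m (f a) (f t) (t - a) ≤ actionOn m f g a t := by
      refine iInf_le_of_le f (iInf_le_of_le g (iInf_le_of_le a ?_))
      rw [show a + (t - a) = t by ring]
      exact iInf_le _ ⟨hACat, rfl, rfl⟩
    have hphiH : phiH m h (f a) (f t) ≤ actionOn m f g a t + ENNReal.ofReal (h * (t - a)) := by
      refine le_trans (iInf_le_of_le (t - a)
        (iInf_le_of_le (by linarith [ht.1] : (0:ℝ) < t - a) le_rfl)) ?_
      exact add_le_add_left hphi _
    have hd1 : u (f t) - u (f a) ≤ (actionOn m f g a t).toReal + h * (t - a) := by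
      have h4 := (hdom (f a) (f t)).trans hphiH
      have h5 : actionOn m f g a t + ENNReal.ofReal (h * (t - a)) ≠ ⊤ :=
        ENNReal.add_ne_top.2 ⟨hAat, ENNReal.ofReal_ne_top⟩
      have h6 := (ENNReal.ofReal_le_iff_le_toReal h5).1 h4
      rwa [ENNReal.toReal_add hAat ENNReal.ofReal_ne_top,
        ENNReal.toReal_ofReal (mul_nonneg hh (by linarith [ht.1]))] at h6
    have hcal2 : u (f b) - u (f a) = (actionOn m f g a b).toReal + h * (b - a) := by
      rw [← hcal.2, actionOnH, ENNReal.toReal_add hAfin ENNReal.ofReal_ne_top,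
        ENNReal.toReal_ofReal (mul_nonneg hh (by linarith))]
    have hts : (actionOn m f g a b).toReal
        = (actionOn m f g a t).toReal + (actionOn m f g t b).toReal := by
      rw [hsplit, ENNReal.toReal_add hAat hAtb]
    have hring : h * (b - a) = h * (t - a) + h * (b - t) := by ring
    have hht : 0 ≤ h * (b - t) := mul_nonneg hh (by linarith [ht.2])
    linarith
  -- choose t close to b
  set ε₀ : ℝ := min (r / (c6 + 1)) ((c5 / (((K:ℝ) + 1) * (c6 + 1))) ^ 2) with hε₀def
  have hK0 : (0:ℝ) ≤ (K:ℝ) := K.2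
  have hε₀ : 0 < ε₀ := lt_min (by positivity) (by positivity)
  obtain ⟨t, htIoo, hMtε⟩ : ∃ t ∈ Set.Ioo a b, M t < ε₀ := by
    have hMeq : ∀ t ∈ Set.Icc a b,
        M t = (∫ σ in a..b, mnorm m (g σ)) - ∫ σ in a..t, mnorm m (g σ) := by
      intro t ht
      show (∫ σ in t..b, mnorm m (g σ))
          = (∫ σ in a..b, mnorm m (g σ)) - ∫ σ in a..t, mnorm m (g σ)
      rw [intervalIntegral.integral_interval_sub_left (hmnII a haib b hbib hab.le)
        (hmnII a haib t ht ht.1)]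
    have hcont : ContinuousOn M (Set.Icc a b) := by
      have h1 : ContinuousOn (fun t => ∫ σ in Set.Ioc a t, mnorm m (g σ) ∂volume)
          (Set.Icc a b) := intervalIntegral.continuousOn_primitive hmnInt
      have h2 : ContinuousOn (fun x => (∫ σ in a..b, mnorm m (g σ))
          - ∫ σ in Set.Ioc a x, mnorm m (g σ) ∂volume) (Set.Icc a b) :=
        continuousOn_const.sub h1
      refine h2.congr ?_
      intro t ht
      rw [hMeq t ht, intervalIntegral.integral_of_le ht.1]
    have hMb : M b = 0 := by
      rw [hMdef]; simp
    have h3 : Filter.Tendsto M (nhdsWithin b (Set.Ioo a b)) (nhds 0) := by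
      have h4 := hcont b hbib
      rw [ContinuousWithinAt, hMb] at h4
      exact h4.mono_left (nhdsWithin_mono b Set.Ioo_subset_Icc_self)
    have hne : (nhdsWithin b (Set.Ioo a b)).NeBot := by
      apply mem_closure_iff_nhdsWithin_neBot.1
      rw [closure_Ioo hab.ne]
      exact ⟨hab.le, le_rfl⟩
    obtain ⟨t, h6, h7⟩ := ((h3.eventually_lt_const hε₀).and eventually_mem_nhdsWithin).exists
    exact ⟨t, h7, h6⟩
  -- conclude
  rcases (hM0 t (Set.Ioo_subset_Icc_self htIoo)).eq_or_lt with hMt0 | hMtpos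
  · exact hKEY0 t ⟨htIoo.1.le, htIoo.2⟩ hMt0.symm
  · have htico : t ∈ Set.Ico a b := ⟨htIoo.1.le, htIoo.2⟩
    have hAtb : actionOn m f g t b ≠ ⊤ := fun hT =>
      hAfin (top_le_iff.1 (hT ▸ hAmono t htIoo.1.le))
    have h1 : c5 * Real.sqrt (M t) ≤ (actionOn m f g t b).toReal :=
      (ENNReal.ofReal_le_iff_le_toReal hAtb).1 (hKEY1 t htico hMtpos)
    have h2 : (actionOn m f g t b).toReal ≤ u (f b) - u (f t) := hdomt t htIoo
    have hmem : f t ∈ s := by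
      apply hball
      rw [Metric.mem_ball]
      calc dist (f t) (f b) ≤ c6 * M t := hF4 t (Set.Ioo_subset_Icc_self htIoo)
        _ < r := by
          have h7 : M t < r / (c6 + 1) := lt_of_lt_of_le hMtε (min_le_left _ _)
          have h8 : M t * (c6 + 1) < r := by
            rw [← lt_div_iff₀ (by positivity)]
            exact h7
          have h9 := hM0 t (Set.Ioo_subset_Icc_self htIoo)
          nlinarith
    have h3 : u (f b) - u (f t) ≤ (K:ℝ) * (c6 * M t) := by
      have h4 : ψ (f b) - ψ (f t) ≤ (K:ℝ) * dist (f b) (f t) := by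
        have h9 := hK.dist_le_mul (f b) (mem_of_mem_nhds hs) (f t) hmem
        calc ψ (f b) - ψ (f t) ≤ |ψ (f b) - ψ (f t)| := le_abs_self _
          _ = dist (ψ (f b)) (ψ (f t)) := (Real.dist_eq _ _).symm
          _ ≤ (K:ℝ) * dist (f b) (f t) := h9
      have h5 : dist (f b) (f t) ≤ c6 * M t := by
        rw [dist_comm]; exact hF4 t (Set.Ioo_subset_Icc_self htIoo)
      have h6 : ψ (f t) ≤ u (f t) := hψle _ hmem
      have h8 : (K:ℝ) * dist (f b) (f t) ≤ (K:ℝ) * (c6 * M t) :=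
        mul_le_mul_of_nonneg_left h5 hK0
      linarith [hψeq]
    have hsq : Real.sqrt (M t) < c5 / (((K:ℝ) + 1) * (c6 + 1)) := by
      have h7 : M t < (c5 / (((K:ℝ) + 1) * (c6 + 1))) ^ 2 :=
        lt_of_lt_of_le hMtε (min_le_right _ _)
      have h8 := Real.sqrt_lt_sqrt (hM0 t (Set.Ioo_subset_Icc_self htIoo)) h7
      rwa [Real.sqrt_sq (by positivity)] at h8
    have hs1 : 0 < Real.sqrt (M t) := Real.sqrt_pos.2 hMtpos
    have hsqq : Real.sqrt (M t) * Real.sqrt (M t) = M t := Real.mul_self_sqrt hMtpos.le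
    have hB : Real.sqrt (M t) * (((K:ℝ) + 1) * (c6 + 1)) < c5 := by
      rw [← lt_div_iff₀ (by positivity)]
      exact hsq
    have hKc : (K:ℝ) * c6 ≤ ((K:ℝ) + 1) * (c6 + 1) := by nlinarith
    have e4 : (K:ℝ) * (c6 * M t) = ((K:ℝ) * c6) * (Real.sqrt (M t) * Real.sqrt (M t)) := by
      rw [hsqq]; ring
    have e5 : ((K:ℝ) * c6) * (Real.sqrt (M t) * Real.sqrt (M t))
        ≤ (((K:ℝ) + 1) * (c6 + 1)) * (Real.sqrt (M t) * Real.sqrt (M t)) :=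
      mul_le_mul_of_nonneg_right hKc (mul_self_nonneg _)
    have e6 : (((K:ℝ) + 1) * (c6 + 1)) * (Real.sqrt (M t) * Real.sqrt (M t))
        < c5 * Real.sqrt (M t) := by
      have e7 := mul_lt_mul_of_pos_right hB hs1
      have e8 : (((K:ℝ) + 1) * (c6 + 1)) * (Real.sqrt (M t) * Real.sqrt (M t))
          = (Real.sqrt (M t) * (((K:ℝ) + 1) * (c6 + 1))) * Real.sqrt (M t) := by ring
      rw [e8]; exact e7
    linarith

end NBodyHJ
end
end

section
/- (Chazy's Lemma.) Let V be a finite-dimensional real inner product space, let W ⊆ V be an open set invariant under multiplication by positive scalars, and let U : W → ℝ be a C² function homogeneous of degree −1 (U(λx) = λ⁻¹U(x) for all λ > 0, x ∈ W). Let x : [0,+∞) → W be a solution of ẍ = ∇U(x) with x(t) = t·a + o(t) as t → +∞ for some a ∈ W. Then: (1) ẋ(t) → a as t → +∞. (2) For every ε > 0 there exist t₁ > 0 and δ > 0 such that every maximal solution y : [0,T) → W of ÿ = ∇U(y) with ‖y(0) − x(0)‖ < δ and ‖ẏ(0) − ẋ(0)‖ < δ satisfies: T = +∞, ‖y(t)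 − t·a‖ < t·ε for all t > t₁, and there exists b ∈ W with ‖b − a‖ < ε such that y(t) = t·b + o(t) as t → +∞. -/
open MeasureTheory Filter Topology Set
open scoped ENNReal

noncomputable section

namespace NBodyHJ

variable {N : ℕ} {E : Type*} [NormedAddCommGroup E] [InnerProductSpace ℝ E]

section ChazyAux

open Metric intervalIntegral
open scoped NNReal

variable {V : Type*} [NormedAddCommGroup V] [InnerProductSpace ℝ V] [FiniteDimensional ℝ V]

/-- continuous induction on an interval -/
lemma cont_induction {a b : ℝ} {P : ℝ → Prop} (hab : a ≤ b)
    (hP : ∀ t ∈ Icc a b, (∀ u ∈ Ico a t, P u) → P t)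
    (hnext : ∀ t ∈ Ico a b, (∀ u ∈ Icc a t, P u) → ∃ ν > (0:ℝ), ∀ u ∈ Icc t (t + ν), u ≤ b → P u) :
    ∀ t ∈ Icc a b, P t := by
  by_contra hcon
  push_neg at hcon
  obtain ⟨t0, ht0, ht0P⟩ := hcon
  set B : Set ℝ := {t | t ∈ Icc a b ∧ ¬ P t} with hB
  have hBne : B.Nonempty := ⟨t0, ht0, ht0P⟩
  have hBbdd : BddBelow B := ⟨a, fun u hu => hu.1.1⟩
  set c := sInf B with hc
  have hca : a ≤ c := le_csInf hBne fun u hu => hu.1.1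
  have hct0 : c ≤ t0 := csInf_le hBbdd ⟨ht0, ht0P⟩
  have hcb : c ≤ b := hct0.trans ht0.2
  have hist : ∀ u ∈ Ico a c, P u := by
    intro u hu
    by_contra hPu
    exact absurd (csInf_le hBbdd ⟨⟨hu.1, hu.2.le.trans hcb⟩, hPu⟩) (not_le.mpr hu.2)
  have hPc : P c := hP c ⟨hca, hcb⟩ hist
  rcases eq_or_lt_of_le hcb with h | h
  · -- c = b : then every element of B is ≥ c and ≤ b = c so equals c, but P c
    obtain ⟨u, hu⟩ := hBne
    have h1 : c ≤ u := csInf_le hBbdd hu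
    have h2 : u ≤ c := h ▸ hu.1.2
    exact hu.2 ((le_antisymm h2 h1) ▸ hPc)
  · have histc : ∀ u ∈ Icc a c, P u := by
      intro u hu
      rcases eq_or_lt_of_le hu.2 with h' | h'
      · exact h' ▸ hPc
      · exact hist u ⟨hu.1, h'⟩
    obtain ⟨ν, hν, hνP⟩ := hnext c ⟨hca, h⟩ histc
    have hlb : ∀ u ∈ B, min (c + ν) b ≤ u := by
      intro u hu
      by_contra hlt
      push_neg at hlt
      have hcu : c ≤ u := csInf_le hBbdd hu
      exact hu.2 (hνP u ⟨hcu, (hlt.trans_le (min_le_left _ _)).le⟩ hu.1.2)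
    have : min (c + ν) b ≤ c := le_csInf hBne hlb
    have : min (c + ν) b > c := lt_min (by linarith) h
    linarith
  

/-- Fundamental theorem of calculus convenience form. -/
lemma ftc {f g : ℝ → V} {s t : ℝ} (hst : s ≤ t)
    (hderiv : ∀ u ∈ Icc s t, HasDerivAt f (g u) u)
    (hcont : ContinuousOn g (Icc s t)) :
    f t = f s + ∫ u in s..t, g u := by
  rw [integral_eq_sub_of_hasDerivAt (fun u hu => hderiv u (by rwa [uIcc_of_le hst] at hu))
    ((hcont.mono (by rw [uIcc_of_le hst])).intervalIntegrable)]
  abel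

/-- bound for the integral of `M/u^2`. -/
lemma integral_inv_sq {s t M : ℝ} (h0 : 0 < s) (hst : s ≤ t) :
    ∫ u in s..t, M / u ^ 2 = M / s - M / t := by
  have : ∀ u ∈ uIcc s t, HasDerivAt (fun u : ℝ => -(M / u)) (M / u ^ 2) u := by
    intro u hu
    rw [uIcc_of_le hst] at hu
    have hu0 : u ≠ 0 := (h0.trans_le hu.1).ne'
    have := ((hasDerivAt_inv hu0).const_mul M).fun_neg
    simpa [div_eq_mul_inv, neg_mul, sq] using this
  rw [integral_eq_sub_of_hasDerivAt this]
  · ring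
  · apply ContinuousOn.intervalIntegrable
    intro u hu
    rw [uIcc_of_le hst] at hu
    exact (continuousOn_const.div (continuousOn_pow 2) (fun z hz => by
      rw [uIcc_of_le hst] at hz; exact pow_ne_zero 2 (h0.trans_le hz.1).ne')) u
      (by rwa [uIcc_of_le hst])

/-- norm bound for an integral of a function dominated by `M/u^2` on the open interval. -/
lemma norm_integral_le_inv_sq {g : ℝ → V} {s t M : ℝ} (h0 : 0 < s) (hst : s ≤ t)
    (hM : 0 ≤ M) (hcont : ContinuousOn g (Icc s t))
    (hb : ∀ u ∈ Ico s t, ‖g u‖ ≤ M / u ^ 2) :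
    ‖∫ u in s..t, g u‖ ≤ M / s := by
  have h1 : ‖∫ u in s..t, g u‖ ≤ |∫ u in s..t, M / u ^ 2| := by
    apply intervalIntegral.norm_integral_le_abs_of_norm_le
    · rw [uIoc_of_le hst, ← MeasureTheory.Measure.restrict_congr_set Ioo_ae_eq_Ioc]
      filter_upwards [ae_restrict_mem measurableSet_Ioo] with u hu
      exact hb u ⟨hu.1.le, hu.2⟩
    · apply ContinuousOn.intervalIntegrable
      intro u hu
      rw [uIcc_of_le hst] at hu
      exact (continuousOn_const.div (continuousOn_pow 2) (fun z hz => by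
        rw [uIcc_of_le hst] at hz; exact pow_ne_zero 2 (h0.trans_le hz.1).ne')) u
        (by rwa [uIcc_of_le hst])
  rw [abs_of_nonneg (intervalIntegral.integral_nonneg hst (fun u hu => by
    have := h0.trans_le hu.1; positivity)), integral_inv_sq h0 hst] at h1
  have : 0 ≤ M / t := div_nonneg hM (h0.trans_le hst).le
  linarith

/-- A function whose derivative decays like `M/t^2` has a limit at infinity. -/
lemma vel_limit {g w : ℝ → V} {t₀ M : ℝ} (h0 : 0 < t₀)
    (hderiv : ∀ t ∈ Ici t₀, HasDerivAt w (g t) t) (hcont : ContinuousOn g (Ici t₀))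
    (hb : ∀ t ∈ Ici t₀, ‖g t‖ ≤ M / t ^ 2) :
    ∃ b, Tendsto w atTop (nhds b) := by
  have hint : IntegrableOn g (Ioi t₀) := by
    have hrpow : IntegrableOn (fun u : ℝ => M * u ^ (-2 : ℝ)) (Ioi t₀) :=
      (integrableOn_Ioi_rpow_of_lt (by norm_num) h0).const_mul M
    apply Integrable.mono' hrpow
    · exact (hcont.mono Ioi_subset_Ici_self).aestronglyMeasurable measurableSet_Ioi
    · filter_upwards [ae_restrict_mem measurableSet_Ioi] with u hu
      have hu0 : (0:ℝ) < u := h0.trans hu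
      calc ‖g u‖ ≤ M / u ^ 2 := hb u (mem_Ici.mpr (le_of_lt hu))
        _ = M * u ^ (-2 : ℝ) := by
            rw [Real.rpow_neg hu0.le, div_eq_mul_inv]
            congr 2
            rw [← Real.rpow_natCast u 2]
            norm_num
  have htend : Tendsto (fun t => ∫ u in t₀..t, g u) atTop (nhds (∫ u in Ioi t₀, g u)) :=
    intervalIntegral_tendsto_integral_Ioi t₀ hint tendsto_id
  refine ⟨w t₀ + ∫ u in Ioi t₀, g u, ?_⟩
  have : Tendsto (fun t => w t₀ + ∫ u in t₀..t, g u) atTop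
      (nhds (w t₀ + ∫ u in Ioi t₀, g u)) := tendsto_const_nhds.add htend
  apply this.congr'
  filter_upwards [eventually_ge_atTop t₀] with t ht
  exact (ftc ht (fun u hu => hderiv u hu.1) (hcont.mono Icc_subset_Ici_self)).symm

/-- Cesàro-type lemma: if `f' → b` then `f t / t → b`. -/
lemma cesaro {f g : ℝ → V} {b : V} {S : ℝ}
    (hderiv : ∀ t ∈ Ici S, HasDerivAt f (g t) t) (hcont : ContinuousOn g (Ici S))
    (hg : Tendsto g atTop (nhds b)) :
    Tendsto (fun t : ℝ => t⁻¹ • f t) atTop (nhds b) := by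
  rw [Metric.tendsto_atTop]
  intro ε hε
  obtain ⟨S', hS'⟩ := (Metric.tendsto_atTop.mp hg) (ε/4) (by linarith)
  set S₀ := max (max S S') 1 with hS₀
  set C := ‖f S₀ - S₀ • b‖ with hC
  refine ⟨max (max S₀ 1) (4 * (C + 1) / ε), fun t ht => ?_⟩
  have htS₀ : S₀ ≤ t := le_trans (le_max_left _ _) ((le_max_left _ _).trans ht)
  have hS₀1 : (1:ℝ) ≤ S₀ := le_max_right _ _
  have ht1 : (1:ℝ) ≤ t := hS₀1.trans htS₀
  have ht0 : (0:ℝ) < t := lt_of_lt_of_le zero_lt_one ht1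
  have htC : 4 * (C + 1) / ε ≤ t := (le_max_right _ _).trans ht
  have hfS : f t = f S₀ + ∫ u in S₀..t, g u :=
    ftc htS₀ (fun u hu => hderiv u (le_trans ((le_max_left S S').trans (le_max_left _ _)) hu.1))
      (hcont.mono (fun u hu => le_trans ((le_max_left S S').trans (le_max_left _ _)) hu.1))
  have key : ‖f t - t • b‖ ≤ C + (ε/4) * (t - S₀) := by
    have h1 : f t - t • b = (f S₀ - S₀ • b) + ∫ u in S₀..t, (g u - b) := by
      rw [intervalIntegral.integral_sub, intervalIntegral.integral_const, hfS]
      · module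
      · exact ContinuousOn.intervalIntegrable (by
          rw [uIcc_of_le htS₀]
          exact hcont.mono (fun u hu => le_trans ((le_max_left S S').trans (le_max_left _ _)) hu.1))
      · exact intervalIntegrable_const
    rw [h1]
    refine (norm_add_le _ _).trans ?_
    gcongr
    refine (intervalIntegral.norm_integral_le_abs_of_norm_le (g := fun _ => ε/4) ?_
      intervalIntegrable_const).trans ?_
    · filter_upwards [ae_restrict_mem measurableSet_uIoc] with u hu
      rw [uIoc_of_le htS₀] at hu
      rw [← dist_eq_norm]
      exact (hS' u (le_trans ((le_max_right S S').trans (le_max_left _ _)) hu.1.le)).le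
    · rw [intervalIntegral.integral_const, smul_eq_mul]
      rw [abs_of_nonneg (mul_nonneg (by linarith) (by linarith))]
      linarith
  have : dist (t⁻¹ • f t) b = t⁻¹ * ‖f t - t • b‖ := by
    rw [dist_eq_norm]
    have : t⁻¹ • f t - b = t⁻¹ • (f t - t • b) := by
      rw [smul_sub, smul_smul, inv_mul_cancel₀ ht0.ne', one_smul]
    rw [this, norm_smul, Real.norm_eq_abs, abs_of_pos (by positivity)]
  rw [this]
  have h2 : t⁻¹ * ‖f t - t • b‖ ≤ t⁻¹ * (C + (ε/4) * t) := by
    have h3 : C + (ε/4) * (t - S₀) ≤ C + (ε/4) * t := by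
      have h4 : (0:ℝ) ≤ S₀ * (ε/4) := mul_nonneg (by linarith) (by linarith)
      nlinarith
    exact mul_le_mul_of_nonneg_left (key.trans h3) (by positivity)
  have h5 : t⁻¹ * (C + (ε/4) * t) < ε := by
    rw [mul_add]
    have h6 : t⁻¹ * C ≤ ε / 4 := by
      rw [inv_mul_le_iff₀ ht0]
      calc C ≤ C + 1 := by linarith
        _ = (4 * (C+1) / ε) * (ε / 4) := by field_simp
        _ ≤ t * (ε/4) := by
            apply mul_le_mul_of_nonneg_right htC (by linarith)
    have h7 : t⁻¹ * ((ε/4) * t) = ε/4 := by field_simp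
    rw [h7]
    linarith
  linarith

lemma grad_eq (U : V → ℝ) (q : V) :
    gradient U q = (InnerProductSpace.toDual ℝ V).symm (fderiv ℝ U q) := rfl

lemma grad_contDiffOn {W : Set V} (hW : IsOpen W) {U : V → ℝ} (hU : ContDiffOn ℝ 2 U W) :
    ContDiffOn ℝ 1 (gradient U) W := by
  have h1 : ContDiffOn ℝ 1 (fderiv ℝ U) W := hU.fderiv_of_isOpen hW (by norm_num)
  have h2 : ContDiff ℝ 1 ((InnerProductSpace.toDual ℝ V).symm : (V →L[ℝ] ℝ) → V) :=
    (InnerProductSpace.toDual ℝ V).symm.toLinearIsometry.toContinuousLinearMap.contDiff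
  exact h2.comp_contDiffOn h1

lemma grad_continuousOn {W : Set V} (hW : IsOpen W) {U : V → ℝ} (hU : ContDiffOn ℝ 2 U W) :
    ContinuousOn (gradient U) W :=
  (grad_contDiffOn hW hU).continuousOn

lemma fderiv_grad_continuousOn {W : Set V} (hW : IsOpen W) {U : V → ℝ}
    (hU : ContDiffOn ℝ 2 U W) :
    ContinuousOn (fderiv ℝ (gradient U)) W :=
  (grad_contDiffOn hW hU).continuousOn_fderiv_of_isOpen hW (le_refl 1)

lemma grad_smul {W : Set V} (hW : IsOpen W) {U : V → ℝ} (hU : ContDiffOn ℝ 2 U W)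
    (hhom : ∀ x ∈ W, ∀ l : ℝ, 0 < l → U (l • x) = l⁻¹ * U x)
    {p : V} (hp : p ∈ W) {l : ℝ} (hl : 0 < l) (hlp : l • p ∈ W) :
    gradient U (l • p) = (l ^ 2)⁻¹ • gradient U p := by
  have hd : ∀ q ∈ W, DifferentiableAt ℝ U q := fun q hq =>
    (hU.contDiffAt (hW.mem_nhds hq)).differentiableAt (by norm_num)
  have h1 : HasFDerivAt (fun q => U (l • q)) (l • fderiv ℝ U (l • p)) p := by
    have hinner : HasFDerivAt (fun q : V => l • q) (l • ContinuousLinearMap.id ℝ V) p :=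
      (hasFDerivAt_id p).const_smul l
    have := ((hd _ hlp).hasFDerivAt).comp p hinner
    exact this.congr_fderiv (by ext q; simp)
  have h2 : HasFDerivAt (fun q => U (l • q)) (l⁻¹ • fderiv ℝ U p) p := by
    have h3 : HasFDerivAt (fun q => l⁻¹ • U q) (l⁻¹ • fderiv ℝ U p) p :=
      ((hd p hp).hasFDerivAt).const_smul l⁻¹
    apply h3.congr_of_eventuallyEq
    filter_upwards [hW.mem_nhds hp] with q hq
    rw [hhom q hq l hl, smul_eq_mul]
  have h4 : l • fderiv ℝ U (l • p) = l⁻¹ • fderiv ℝ U p := h1.unique h2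
  have h5 : fderiv ℝ U (l • p) = (l ^ 2)⁻¹ • fderiv ℝ U p := by
    have := congrArg (fun z => l⁻¹ • z) h4
    simpa [smul_smul, inv_mul_cancel₀ hl.ne', sq, mul_inv] using this
  rw [grad_eq, grad_eq, h5, _root_.map_smul]

/-- the first-order vector field associated to Newton's equations -/
def field (U : V → ℝ) (p : V × V) : V × V := (p.2, gradient U p.1)

lemma lip_field {W : Set V} (hW : IsOpen W) {U : V → ℝ} (hU : ContDiffOn ℝ 2 U W)
    {Lg : ℝ≥0} {s : Set V} (hs : s ⊆ W) (hconv : Convex ℝ s)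
    (hb : ∀ z ∈ s, ‖fderiv ℝ (gradient U) z‖₊ ≤ Lg) :
    LipschitzOnWith (max 1 Lg) (field U) (s ×ˢ (univ : Set V)) := by
  have hgradlip : LipschitzOnWith Lg (gradient U) s := by
    apply Convex.lipschitzOnWith_of_nnnorm_fderiv_le (fun z hz =>
      ((grad_contDiffOn hW hU).contDiffAt (hW.mem_nhds (hs hz))).differentiableAt one_ne_zero) hb hconv
  intro q1 hq1 q2 hq2
  rw [Prod.edist_eq, Prod.edist_eq]
  simp only [field]
  apply max_le
  · calc edist q1.2 q2.2 ≤ max (edist q1.1 q2.1) (edist q1.2 q2.2) := le_max_right _ _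
      _ = 1 * max (edist q1.1 q2.1) (edist q1.2 q2.2) := (one_mul _).symm
      _ ≤ (max 1 Lg : ℝ≥0) * max (edist q1.1 q2.1) (edist q1.2 q2.2) := by
          gcongr
          exact_mod_cast le_max_left 1 Lg
  · calc edist (gradient U q1.1) (gradient U q2.1) ≤ Lg * edist q1.1 q2.1 :=
          hgradlip hq1.1 hq2.1
      _ ≤ (max 1 Lg : ℝ≥0) * max (edist q1.1 q2.1) (edist q1.2 q2.2) := by
          gcongr
          · exact_mod_cast le_max_right 1 Lg
          · exact le_max_left _ _





lemma bootstrap {W : Set V} (hW : IsOpen W) {U : V → ℝ} (hU : ContDiffOn ℝ 2 U W)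
    {a : V} {r M ε₁ t₁ : ℝ}
    (hM : 0 ≤ M)
    (hMb : ∀ (p : V) (t : ℝ), 0 < t → ‖p - t • a‖ ≤ r * t → ‖gradient U p‖ ≤ M / t ^ 2)
    (hε₁ : 0 < ε₁) (hε₁r : ε₁ ≤ r) (ht₁ : 1 ≤ t₁) (hMt₁ : M / t₁ ≤ ε₁ / 16)
    {y w : ℝ → V} {t₂ : ℝ} (ht₂ : t₁ ≤ t₂)
    (hsol : ∀ t ∈ Icc t₁ t₂, y t ∈ W ∧ HasDerivAt y (w t) t ∧ HasDerivAt w (gradient U (y t)) t)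
    (hy₁ : ‖y t₁ - t₁ • a‖ ≤ ε₁/8 * t₁) (hw₁ : ‖w t₁ - a‖ ≤ ε₁/8) :
    ∀ t ∈ Icc t₁ t₂, ‖y t - t • a‖ ≤ 5*ε₁/16 * t ∧ ‖w t - a‖ ≤ 3*ε₁/16 := by
  have ht₁0 : (0:ℝ) < t₁ := lt_of_lt_of_le zero_lt_one ht₁
  have hconty : ContinuousOn y (Icc t₁ t₂) :=
    fun u hu => ((hsol u hu).2.1.continuousAt).continuousWithinAt
  have hcontw : ContinuousOn w (Icc t₁ t₂) :=
    fun u hu => ((hsol u hu).2.2.continuousAt).continuousWithinAt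
  have hcontg : ContinuousOn (fun u => gradient U (y u)) (Icc t₁ t₂) :=
    (grad_continuousOn hW hU).comp hconty (fun u hu => (hsol u hu).1)
  set P : ℝ → Prop := fun t => ‖y t - t • a‖ ≤ ε₁/2 * t with hP
  -- the key a priori estimates, given the invariant on the past
  have key_w : ∀ t ∈ Icc t₁ t₂, (∀ u ∈ Ico t₁ t, P u) → ‖w t - a‖ ≤ 3*ε₁/16 := by
    intro t ht hist
    have hftc : w t = w t₁ + ∫ u in t₁..t, gradient U (y u) :=
      ftc ht.1 (fun u hu => (hsol u ⟨hu.1, hu.2.trans ht.2⟩).2.2)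
        (hcontg.mono (fun u hu => ⟨hu.1, hu.2.trans ht.2⟩))
    have hbnd : ‖∫ u in t₁..t, gradient U (y u)‖ ≤ M / t₁ := by
      apply norm_integral_le_inv_sq ht₁0 ht.1 hM
        (hcontg.mono (fun u hu => ⟨hu.1, hu.2.trans ht.2⟩))
      intro u hu
      have hu0 : (0:ℝ) < u := lt_of_lt_of_le ht₁0 hu.1
      apply hMb (y u) u hu0
      calc ‖y u - u • a‖ ≤ ε₁/2 * u := hist u hu
        _ ≤ r * u := by nlinarith
    calc ‖w t - a‖ = ‖(w t₁ - a) + ∫ u in t₁..t, gradient U (y u)‖ := by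
          rw [hftc]
          congr 1
          abel
      _ ≤ ‖w t₁ - a‖ + ‖∫ u in t₁..t, gradient U (y u)‖ := norm_add_le _ _
      _ ≤ ε₁/8 + M/t₁ := add_le_add hw₁ hbnd
      _ ≤ 3*ε₁/16 := by linarith
  have key_y : ∀ t ∈ Icc t₁ t₂, (∀ u ∈ Ico t₁ t, P u) → ‖y t - t • a‖ ≤ 5*ε₁/16 * t := by
    intro t ht hist
    have hw : ∀ u ∈ Icc t₁ t, ‖w u - a‖ ≤ 3*ε₁/16 := fun u hu =>
      key_w u ⟨hu.1, hu.2.trans ht.2⟩ (fun z hz => hist z ⟨hz.1, hz.2.trans_le hu.2⟩)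
    have hftc : y t = y t₁ + ∫ u in t₁..t, w u :=
      ftc ht.1 (fun u hu => (hsol u ⟨hu.1, hu.2.trans ht.2⟩).2.1)
        (hcontw.mono (fun u hu => ⟨hu.1, hu.2.trans ht.2⟩))
    have h1 : y t - t • a = (y t₁ - t₁ • a) + ∫ u in t₁..t, (w u - a) := by
      rw [intervalIntegral.integral_sub, intervalIntegral.integral_const, hftc]
      · module
      · exact ContinuousOn.intervalIntegrable (by
          rw [uIcc_of_le ht.1]
          exact hcontw.mono (fun u hu => ⟨hu.1, hu.2.trans ht.2⟩))
      · exact intervalIntegrable_const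
    have h2 : ‖∫ u in t₁..t, (w u - a)‖ ≤ 3*ε₁/16 * (t - t₁) := by
      refine (intervalIntegral.norm_integral_le_abs_of_norm_le (g := fun _ => 3*ε₁/16) ?_
        intervalIntegrable_const).trans ?_
      · filter_upwards [ae_restrict_mem measurableSet_uIoc] with u hu
        rw [uIoc_of_le ht.1] at hu
        exact hw u ⟨hu.1.le, hu.2⟩
      · rw [intervalIntegral.integral_const, smul_eq_mul,
          abs_of_nonneg (mul_nonneg (by linarith [ht.1]) (by linarith))]
        linarith
    calc ‖y t - t • a‖ ≤ ‖y t₁ - t₁ • a‖ + ‖∫ u in t₁..t, (w u - a)‖ := by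
          rw [h1]; exact norm_add_le _ _
      _ ≤ ε₁/8 * t₁ + 3*ε₁/16 * (t - t₁) := add_le_add hy₁ h2
      _ ≤ 5*ε₁/16 * t := by nlinarith [ht.1]
  have hind : ∀ t ∈ Icc t₁ t₂, P t := by
    refine cont_induction (P := P) ht₂ ?_ ?_
    · intro t ht hist
      have := key_y t ht hist
      have ht0 : (0:ℝ) < t := lt_of_lt_of_le ht₁0 ht.1
      show ‖y t - t • a‖ ≤ ε₁/2 * t
      nlinarith
    · intro t ht hist
      set φ : ℝ → ℝ := fun u => ‖y u - u • a‖ - ε₁/2 * u with hφ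
      have hφcont : ContinuousOn φ (Icc t₁ t₂) := by
        apply ContinuousOn.sub
        · exact (hconty.sub (continuousOn_id.smul continuousOn_const)).norm
        · exact continuousOn_const.mul continuousOn_id
      have ht0 : (0:ℝ) < t := lt_of_lt_of_le ht₁0 ht.1
      have hφt : φ t < 0 := by
        have := key_y t ⟨ht.1, ht.2.le⟩ (fun u hu => hist u ⟨hu.1, hu.2.le⟩)
        simp only [hφ]
        nlinarith
      have hev : {u | φ u < 0} ∈ 𝓝[Icc t₁ t₂] t :=
        (hφcont t ⟨ht.1, ht.2.le⟩) (Iio_mem_nhds hφt)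
      rw [mem_nhdsWithin] at hev
      obtain ⟨O, hO, htO, hsub⟩ := hev
      obtain ⟨ν, hν, hball⟩ := Metric.isOpen_iff.mp hO t htO
      refine ⟨ν/2, by linarith, fun u hu hu2 => ?_⟩
      have huO : u ∈ O := hball (by
        rw [Metric.mem_ball, Real.dist_eq, abs_of_nonneg (by linarith [hu.1])]
        linarith [hu.2])
      have : φ u < 0 := hsub ⟨huO, ⟨ht.1.trans hu.1, hu2⟩⟩
      show ‖y u - u • a‖ ≤ ε₁/2 * u
      simp only [hφ] at this
      linarith
  intro t ht
  exact ⟨key_y t ht (fun u hu => hind u ⟨hu.1, hu.2.le.trans ht.2⟩),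
    key_w t ht (fun u hu => hind u ⟨hu.1, hu.2.le.trans ht.2⟩)⟩

lemma tube {U : V → ℝ} {x v : ℝ → V} {t₁ : ℝ} (ht₁ : 0 ≤ t₁)
    (hsolx : ∀ t ∈ Icc 0 t₁, HasDerivAt x (v t) t ∧ HasDerivAt v (gradient U (x t)) t)
    {ρ : ℝ} (hρ : 0 < ρ) {K : ℝ≥0}
    (hlip : ∀ t : ℝ, LipschitzOnWith K (field U)
      (closedBall (x (max 0 (min t t₁)), v (max 0 (min t t₁))) ρ))
    {δ : ℝ} (hδ : 0 < δ) (hδs : δ * Real.exp ((K : ℝ) * t₁) ≤ ρ / 2)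
    {y w : ℝ → V} {t₂ : ℝ} (ht₂ : t₂ ∈ Icc 0 t₁)
    (hsoly : ∀ t ∈ Icc 0 t₂, HasDerivAt y (w t) t ∧ HasDerivAt w (gradient U (y t)) t)
    (h0 : dist ((y 0), (w 0)) ((x 0), (v 0)) ≤ δ) :
    ∀ t ∈ Icc 0 t₂, dist ((y t), (w t)) ((x t), (v t)) ≤ δ * Real.exp ((K : ℝ) * t₁) := by
  set X : ℝ → V × V := fun t => (x t, v t) with hX
  set Y : ℝ → V × V := fun t => (y t, w t) with hY
  have hcontX : ContinuousOn X (Icc 0 t₁) := fun u hu =>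
    (((hsolx u hu).1.continuousAt).prodMk ((hsolx u hu).2.continuousAt)).continuousWithinAt
  have hcontY : ContinuousOn Y (Icc 0 t₂) := fun u hu =>
    (((hsoly u hu).1.continuousAt).prodMk ((hsoly u hu).2.continuousAt)).continuousWithinAt
  have key : ∀ t ∈ Icc 0 t₂, (∀ u ∈ Ico 0 t, dist (Y u) (X u) ≤ ρ) →
      dist (Y t) (X t) ≤ δ * Real.exp ((K : ℝ) * t₁) := by
    intro t ht hist
    have hsub : Icc 0 t ⊆ Icc 0 t₂ := Icc_subset_Icc le_rfl ht.2
    have hsub1 : Icc 0 t ⊆ Icc 0 t₁ := Icc_subset_Icc le_rfl (ht.2.trans ht₂.2)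
    have hG := dist_le_of_trajectories_ODE_of_mem
      (v := fun _ => field U)
      (s := fun u => closedBall (X (max 0 (min u t₁))) ρ)
      (K := K) (f := Y) (g := X) (a := 0) (b := t) (δ := δ)
      (fun u _ => hlip u)
      (hcontY.mono hsub)
      (fun u hu => by
        have h1 := (hsoly u (hsub ⟨hu.1, hu.2.le⟩)).1
        have h2 := (hsoly u (hsub ⟨hu.1, hu.2.le⟩)).2
        exact (h1.prodMk h2).hasDerivWithinAt)
      (fun u hu => by
        have hc : max 0 (min u t₁) = u := by
          rw [min_eq_left (hu.2.le.trans (ht.2.trans ht₂.2)), max_eq_right hu.1]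
        show Y u ∈ closedBall (X (max 0 (min u t₁))) ρ
        rw [hc, mem_closedBall]
        exact hist u hu)
      (hcontX.mono hsub1)
      (fun u hu => by
        have h1 := (hsolx u (hsub1 ⟨hu.1, hu.2.le⟩)).1
        have h2 := (hsolx u (hsub1 ⟨hu.1, hu.2.le⟩)).2
        exact (h1.prodMk h2).hasDerivWithinAt)
      (fun u hu => by
        have hc : max 0 (min u t₁) = u := by
          rw [min_eq_left (hu.2.le.trans (ht.2.trans ht₂.2)), max_eq_right hu.1]
        show X u ∈ closedBall (X (max 0 (min u t₁))) ρ
        rw [hc]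
        exact mem_closedBall_self hρ.le)
      h0 t ⟨ht.1, le_rfl⟩
    calc dist (Y t) (X t) ≤ δ * Real.exp ((K:ℝ) * (t - 0)) := hG
      _ ≤ δ * Real.exp ((K:ℝ) * t₁) := by
          apply mul_le_mul_of_nonneg_left _ hδ.le
          apply Real.exp_le_exp.mpr
          have := ht.2.trans ht₂.2
          nlinarith [K.coe_nonneg, ht.1]
  have hind : ∀ t ∈ Icc 0 t₂, dist (Y t) (X t) ≤ ρ := by
    refine cont_induction (P := fun t => dist (Y t) (X t) ≤ ρ) ht₂.1 ?_ ?_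
    · intro t ht hist
      exact (key t ht hist).trans (by linarith)
    · intro t ht hist
      set φ : ℝ → ℝ := fun u => dist (Y u) (X u) - ρ with hφ
      have hφcont : ContinuousOn φ (Icc 0 t₂) := by
        apply ContinuousOn.sub _ continuousOn_const
        exact fun u hu => (hcontY u hu).dist ((hcontX.mono (Icc_subset_Icc le_rfl ht₂.2)) u hu)
      have hφt : φ t < 0 := by
        have := key t ⟨ht.1, ht.2.le⟩ (fun u hu => hist u ⟨hu.1, hu.2.le⟩)
        simp only [hφ]
        nlinarith [Real.exp_pos ((K:ℝ) * t₁)]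
      have hev : {u | φ u < 0} ∈ 𝓝[Icc 0 t₂] t :=
        (hφcont t ⟨ht.1, ht.2.le⟩) (Iio_mem_nhds hφt)
      rw [mem_nhdsWithin] at hev
      obtain ⟨O, hO, htO, hsub⟩ := hev
      obtain ⟨ν, hν, hball⟩ := Metric.isOpen_iff.mp hO t htO
      refine ⟨ν/2, by linarith, fun u hu hu2 => ?_⟩
      have huO : u ∈ O := hball (by
        rw [Metric.mem_ball, Real.dist_eq, abs_of_nonneg (by linarith [hu.1])]
        linarith [hu.2])
      have : φ u < 0 := hsub ⟨huO, ⟨ht.1.trans hu.1, hu2⟩⟩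
      simp only [hφ] at this
      show dist (Y u) (X u) ≤ ρ
      linarith
  intro t ht
  exact key t ht (fun u hu => hind u ⟨hu.1, hu.2.le.trans ht.2⟩)

set_option maxHeartbeats 1000000 in
lemma extension {W : Set V} (hW : IsOpen W) {U : V → ℝ} (hU : ContDiffOn ℝ 2 U W)
    {T : ℝ} (hT : 0 < T) {y w : ℝ → V}
    (hsol : ∀ t ∈ Ico 0 T, y t ∈ W ∧ HasDerivAt y (w t) t ∧ HasDerivAt w (gradient U (y t)) t)
    {A : Set V} {B : ℝ}
    (hA : IsCompact A) (hAW : A ⊆ W) (hB : 0 ≤ B)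
    (hmem : ∀ t ∈ Ico 0 T, y t ∈ A ∧ ‖w t‖ ≤ B) :
    ∃ (T' : ℝ) (z wz : ℝ → V), T < T' ∧
      (∀ t ∈ Ico 0 T', z t ∈ W ∧ HasDerivAt z (wz t) t ∧ HasDerivAt wz (gradient U (z t)) t) ∧
      z 0 = y 0 ∧ wz 0 = w 0 := by
  classical
  -- thickening of the compact set
  obtain ⟨ρ, hρ, hK₂W⟩ := hA.exists_cthickening_subset_open hW hAW
  set K₂ : Set V := Metric.cthickening ρ A with hK₂
  have hK₂c : IsCompact K₂ := hA.cthickening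
  have hAK₂ : A ⊆ K₂ := self_subset_cthickening A
  -- Lipschitz constant for the gradient on K₂
  obtain ⟨Lg, hLg⟩ := hK₂c.exists_bound_of_continuousOn
    ((fderiv_grad_continuousOn hW hU).mono hK₂W)
  set LK : ℝ≥0 := max 1 Lg.toNNReal with hLK
  have hLgK : ∀ z ∈ K₂, ‖fderiv ℝ (gradient U) z‖₊ ≤ LK := by
    intro z hz
    rw [← NNReal.coe_le_coe]
    refine le_trans ?_ (le_max_right 1 _ : (Lg.toNNReal : ℝ) ≤ _)
    rw [Real.coe_toNNReal']
    exact le_max_of_le_left (hLg z hz)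
  -- field bound on compact product set
  set 𝒦 : Set (V × V) := K₂ ×ˢ closedBall 0 (B + ρ) with h𝒦
  have h𝒦c : IsCompact 𝒦 := hK₂c.prod (isCompact_closedBall 0 (B + ρ))
  have hfieldcont : ContinuousOn (field U) 𝒦 := by
    apply ContinuousOn.prodMk
    · exact continuous_snd.continuousOn
    · exact (grad_continuousOn hW hU).comp continuous_fst.continuousOn
        (fun p hp => hK₂W hp.1)
  obtain ⟨RF₀, hRF₀⟩ := h𝒦c.exists_bound_of_continuousOn hfieldcont
  set RF : ℝ := max RF₀ 1 with hRF
  have hRF1 : (1:ℝ) ≤ RF := le_max_right _ _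
  have hRF0 : (0:ℝ) < RF := lt_of_lt_of_le zero_lt_one hRF1
  have hRFb : ∀ p ∈ 𝒦, ‖field U p‖ ≤ RF := fun p hp => (hRF₀ p hp).trans (le_max_left _ _)
  set σ : ℝ := ρ / RF with hσ
  have hσ0 : 0 < σ := div_pos hρ hRF0
  have hσρ : RF * σ ≤ ρ := by rw [hσ]; field_simp; exact le_rfl
  -- the restart time τ
  set τ : ℝ := max (T/2) (T - σ/4) with hτ
  have hτ0 : 0 < τ := lt_of_lt_of_le (by linarith) (le_max_left _ _)
  have hτT : τ < T := max_lt (by linarith) (by linarith)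
  have hTτ : T - τ ≤ σ/4 := by
    have := le_max_right (T/2) (T - σ/4)
    linarith
  have hyτ : y τ ∈ A := (hmem τ ⟨hτ0.le, hτT⟩).1
  have hwτ : ‖w τ‖ ≤ B := (hmem τ ⟨hτ0.le, hτT⟩).2
  set q₀ : V × V := (y τ, w τ) with hq₀
  have hq₀𝒦 : q₀ ∈ 𝒦 := ⟨hAK₂ hyτ, by
    rw [mem_closedBall, dist_zero_right]; linarith⟩
  have hballK₂ : closedBall (y τ) ρ ⊆ K₂ := closedBall_subset_cthickening hyτ ρ
  have hball𝒦 : closedBall q₀ ρ ⊆ 𝒦 := by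
    intro p hp
    rw [mem_closedBall, Prod.dist_eq, max_le_iff] at hp
    constructor
    · exact hballK₂ (mem_closedBall.mpr hp.1)
    · rw [mem_closedBall, dist_zero_right]
      calc ‖p.2‖ ≤ ‖w τ‖ + dist p.2 (w τ) := by
            rw [dist_eq_norm]
            have := norm_add_le (w τ) (p.2 - w τ)
            simpa using this
        _ ≤ B + ρ := add_le_add hwτ hp.2
  have hliploc : LipschitzOnWith LK (field U) (closedBall q₀ ρ) := by
    have h1 : LipschitzOnWith LK (field U) (closedBall (y τ) ρ ×ˢ (univ : Set V)) := by
      have := lip_field hW hU (Lg := LK) (s := closedBall (y τ) ρ)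
        (fun z hz => hK₂W (hballK₂ hz)) (convex_closedBall _ _)
        (fun z hz => hLgK z (hballK₂ hz))
      simpa [max_self, max_eq_right (show (1:ℝ≥0) ≤ LK from le_max_left _ _), max_eq_right (le_max_left (1:ℝ≥0) Lg.toNNReal)] using this
    apply h1.mono
    rw [hq₀, ← closedBall_prod_same]
    exact prod_mono_right (subset_univ _)
  -- Picard-Lindelöf
  have hpl : IsPicardLindelof (fun _ => field U) (tmin := τ - σ) (tmax := τ + σ)
      ⟨τ, ⟨by linarith, by linarith⟩⟩ q₀ ρ.toNNReal 0 RF.toNNReal LK :=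
    { lipschitzOnWith := fun t _ => by rw [Real.coe_toNNReal _ hρ.le]; exact hliploc
      continuousOn := fun x _ => continuousOn_const
      norm_le := fun t _ p hp => by
        rw [Real.coe_toNNReal _ hRF0.le]
        exact hRFb p (hball𝒦 (by rwa [Real.coe_toNNReal _ hρ.le] at hp))
      mul_max_le := by
        have h1 : τ + σ - τ = σ := by ring
        have h2 : τ - (τ - σ) = σ := by ring
        simp only [Real.coe_toNNReal _ hRF0.le, Real.coe_toNNReal _ hρ.le, NNReal.coe_zero,
          sub_zero, tsub_zero, Subtype.coe_mk, h1, h2, max_self]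
        exact hσρ }
  obtain ⟨α, hατ, hα⟩ : ∃ α : ℝ → V × V, α τ = q₀ ∧ ∀ t ∈ Icc (τ - σ) (τ + σ),
      HasDerivWithinAt α (field U (α t)) (Icc (τ - σ) (τ + σ)) t :=
    hpl.exists_eq_forall_mem_Icc_hasDerivWithinAt₀
  have hαderiv : ∀ t ∈ Ioo (τ - σ) (τ + σ), HasDerivAt α (field U (α t)) t := fun t ht =>
    (hα t (Ioo_subset_Icc_self ht)).hasDerivAt (Icc_mem_nhds ht.1 ht.2)
  have hsub₂ : Icc τ (τ + σ/2) ⊆ Ioo (τ - σ) (τ + σ) := fun u hu =>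
    ⟨by linarith [hu.1], by linarith [hu.2]⟩
  have hαcont : ContinuousOn α (Icc τ (τ + σ/2)) := fun u hu =>
    ((hαderiv u (hsub₂ hu)).continuousAt).continuousWithinAt
  -- forward invariance of the ball
  have hinv : ∀ t ∈ Icc τ (τ + σ/2), α t ∈ closedBall q₀ ρ := by
    have key : ∀ t ∈ Icc τ (τ + σ/2), (∀ u ∈ Ico τ t, α u ∈ closedBall q₀ ρ) →
        ‖α t - α τ‖ ≤ ρ / 2 := by
      intro t ht hist
      have hmv := norm_image_sub_le_of_norm_deriv_right_le_segment (f := α)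
        (f' := fun u => field U (α u)) (C := RF) (a := τ) (b := t)
        (hαcont.mono (Icc_subset_Icc le_rfl ht.2))
        (fun u hu => (hαderiv u (hsub₂ ⟨hu.1, hu.2.le.trans ht.2⟩)).hasDerivWithinAt)
        (fun u hu => hRFb _ (hball𝒦 (hist u hu)))
        t ⟨ht.1, le_rfl⟩
      calc ‖α t - α τ‖ ≤ RF * (t - τ) := hmv
        _ ≤ RF * (σ/2) := by
            apply mul_le_mul_of_nonneg_left _ hRF0.le
            linarith [ht.2]
        _ ≤ ρ / 2 := by linarith [hσρ]
    refine cont_induction (P := fun t => α t ∈ closedBall q₀ ρ) (by linarith) ?_ ?_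
    · intro t ht hist
      rw [mem_closedBall, dist_eq_norm, ← hατ]
      linarith [key t ht hist]
    · intro t ht hist
      set φ : ℝ → ℝ := fun u => dist (α u) q₀ - ρ with hφ
      have hφcont : ContinuousOn φ (Icc τ (τ + σ/2)) :=
        fun u hu => ((hαcont u hu).dist continuousWithinAt_const).sub continuousWithinAt_const
      have hφt : φ t < 0 := by
        have h := key t ⟨ht.1, ht.2.le⟩ (fun u hu => hist u ⟨hu.1, hu.2.le⟩)
        have h2 : dist (α t) q₀ ≤ ρ / 2 := by
          rw [dist_eq_norm, ← hατ]; exact h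
        simp only [hφ]
        linarith
      have hev : {u | φ u < 0} ∈ 𝓝[Icc τ (τ + σ/2)] t :=
        (hφcont t ⟨ht.1, ht.2.le⟩) (Iio_mem_nhds hφt)
      rw [mem_nhdsWithin] at hev
      obtain ⟨O, hO, htO, hsubO⟩ := hev
      obtain ⟨ν, hν, hballν⟩ := Metric.isOpen_iff.mp hO t htO
      refine ⟨ν/2, by linarith, fun u hu hu2 => ?_⟩
      have huO : u ∈ O := hballν (by
        rw [Metric.mem_ball, Real.dist_eq, abs_of_nonneg (by linarith [hu.1])]
        linarith [hu.2])
      have : φ u < 0 := hsubO ⟨huO, ⟨ht.1.trans hu.1, hu2⟩⟩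
      simp only [hφ] at this
      show dist (α u) q₀ ≤ ρ
      linarith
  -- the given solution, paired
  set Y : ℝ → V × V := fun t => (y t, w t) with hYdef
  have hYmem𝒦 : ∀ u ∈ Ico 0 T, Y u ∈ 𝒦 := by
    intro u hu
    refine ⟨hAK₂ (hmem u hu).1, ?_⟩
    rw [mem_closedBall, dist_zero_right]
    exact le_trans (hmem u hu).2 (by linarith)
  have hYcont : ∀ b ∈ Ico τ T, ContinuousOn Y (Icc τ b) := by
    intro b hb u hu
    have hu' : u ∈ Ico 0 T := ⟨hτ0.le.trans hu.1, hu.2.trans_lt hb.2⟩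
    exact (((hsol u hu').2.1.continuousAt).prodMk ((hsol u hu').2.2.continuousAt)).continuousWithinAt
  have hYderiv : ∀ u ∈ Ico 0 T, HasDerivAt Y (field U (Y u)) u := by
    intro u hu
    exact ((hsol u hu).2.1.prodMk (hsol u hu).2.2)
  have hYball : ∀ b ∈ Ico τ T, ∀ u ∈ Icc τ b, Y u ∈ closedBall q₀ ρ := by
    intro b hb u hu
    have hmv := norm_image_sub_le_of_norm_deriv_right_le_segment (f := Y)
      (f' := fun u => field U (Y u)) (C := RF) (a := τ) (b := b)
      (hYcont b hb)
      (fun u hu => (hYderiv u ⟨hτ0.le.trans hu.1, hu.2.trans hb.2⟩).hasDerivWithinAt)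
      (fun u hu => hRFb _ (hYmem𝒦 u ⟨hτ0.le.trans hu.1, hu.2.trans hb.2⟩))
      u hu
    rw [mem_closedBall, dist_eq_norm]
    have hq : Y τ = q₀ := rfl
    calc ‖Y u - q₀‖ = ‖Y u - Y τ‖ := by rw [hq]
      _ ≤ RF * (u - τ) := hmv
      _ ≤ RF * (σ/4) := by
          apply mul_le_mul_of_nonneg_left _ hRF0.le
          have := hu.2.trans hb.2.le
          linarith
      _ ≤ ρ := by linarith [hσρ]
  have heqY : ∀ u, τ ≤ u → u < T → Y u = α u := by
    intro b hb1 hb2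
    have := ODE_solution_unique_of_mem_Icc_right (v := fun _ => field U)
      (s := fun _ => closedBall q₀ ρ) (K := LK) (f := Y) (g := α) (a := τ) (b := b)
      (fun _ _ => hliploc)
      (hYcont b ⟨hb1, hb2⟩)
      (fun u hu => (hYderiv u ⟨hτ0.le.trans hu.1, hu.2.trans hb2⟩).hasDerivWithinAt)
      (fun u hu => hYball b ⟨hb1, hb2⟩ u ⟨hu.1, hu.2.le⟩)
      (fun u hu => (hαcont.mono (Icc_subset_Icc le_rfl (by linarith))) u hu)
      (fun u hu => by
        have huI : u ∈ Ioo (τ - σ) (τ + σ) := ⟨by linarith [hu.1], by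
          have := hu.2.trans hb2; linarith⟩
        exact (hαderiv u huI).hasDerivWithinAt)
      (fun u hu => hinv u ⟨hu.1, by
        have := hu.2.trans hb2; linarith⟩)
      (by rw [hατ])
    exact this ⟨hb1, le_rfl⟩
  -- construct the extension
  set T' : ℝ := T + σ/8 with hT'
  have hT'le : T' ≤ τ + σ/2 := by linarith
  refine ⟨T', (fun t => if t < T then y t else (α t).1),
    (fun t => if t < T then w t else (α t).2), by rw [hT']; linarith, ?_, if_pos hT, if_pos hT⟩
  intro t ht
  by_cases htT : t < T
  · have evz : (fun t => if t < T then y t else (α t).1) =ᶠ[nhds t] y := by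
      filter_upwards [Iio_mem_nhds htT] with u hu
      exact if_pos hu
    have evw : (fun t => if t < T then w t else (α t).2) =ᶠ[nhds t] w := by
      filter_upwards [Iio_mem_nhds htT] with u hu
      exact if_pos hu
    obtain ⟨h1, h2, h3⟩ := hsol t ⟨ht.1, htT⟩
    refine ⟨by simp only [if_pos htT]; exact h1, ?_, ?_⟩
    · simp only [if_pos htT]
      exact evz.hasDerivAt_iff.mpr h2
    · simp only [if_pos htT]
      exact evw.hasDerivAt_iff.mpr h3
  · push_neg at htT
    have htτ : τ < t := hτT.trans_le htT
    have htσ : t < τ + σ/2 := lt_of_lt_of_le ht.2 hT'le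
    have hzα : ∀ u ∈ Ioo τ (τ + σ/2),
        (if u < T then y u else (α u).1) = (α u).1 ∧
        (if u < T then w u else (α u).2) = (α u).2 := by
      intro u hu
      by_cases huT : u < T
      · have := heqY u hu.1.le huT
        constructor
        · rw [if_pos huT]
          exact congrArg Prod.fst this
        · rw [if_pos huT]
          exact congrArg Prod.snd this
      · exact ⟨if_neg huT, if_neg huT⟩
    have evz : (fun u => if u < T then y u else (α u).1) =ᶠ[nhds t]
        (fun u => (α u).1) := by
      filter_upwards [Ioo_mem_nhds htτ htσ] with u hu
      exact (hzα u hu).1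
    have evw : (fun u => if u < T then w u else (α u).2) =ᶠ[nhds t]
        (fun u => (α u).2) := by
      filter_upwards [Ioo_mem_nhds htτ htσ] with u hu
      exact (hzα u hu).2
    have htIoo : t ∈ Ioo (τ - σ) (τ + σ) := ⟨by linarith, by linarith⟩
    have hαt := hαderiv t htIoo
    have hfst : HasDerivAt (fun u => (α u).1) ((α t).2) t :=
      ((ContinuousLinearMap.fst ℝ V V).hasFDerivAt).comp_hasDerivAt t hαt
    have hsnd : HasDerivAt (fun u => (α u).2) (gradient U ((α t).1)) t :=
      ((ContinuousLinearMap.snd ℝ V V).hasFDerivAt).comp_hasDerivAt t hαt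
    have hαmem : α t ∈ closedBall q₀ ρ := hinv t ⟨htτ.le, by linarith⟩
    have hαW : (α t).1 ∈ W := by
      apply hK₂W
      apply hballK₂
      rw [mem_closedBall]
      calc dist (α t).1 (y τ) ≤ dist (α t) q₀ := by
            rw [Prod.dist_eq]; exact le_max_left _ _
        _ ≤ ρ := mem_closedBall.mp hαmem
    refine ⟨by simp only [if_neg htT.not_gt]; exact hαW, ?_, ?_⟩
    · simp only [if_neg htT.not_gt]
      exact evz.hasDerivAt_iff.mpr hfst
    · simp only [if_neg htT.not_gt]
      exact evw.hasDerivAt_iff.mpr hsnd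


end ChazyAux

section ChazyMain

open Metric intervalIntegral
open scoped NNReal

set_option maxHeartbeats 1000000 in
/- STATEMENT 18 -/
theorem stmt18
    {V : Type*} [NormedAddCommGroup V] [InnerProductSpace ℝ V] [FiniteDimensional ℝ V]
    (W : Set V) (hW : IsOpen W) (hWcone : ∀ x ∈ W, ∀ l : ℝ, 0 < l → l • x ∈ W)
    (U : V → ℝ) (hU : ContDiffOn ℝ 2 U W)
    (hhom : ∀ x ∈ W, ∀ l : ℝ, 0 < l → U (l • x) = l⁻¹ * U x)
    (x v : ℝ → V)
    (hsol : ∀ t ∈ Set.Ici (0:ℝ), x t ∈ W ∧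
      HasDerivAt x (v t) t ∧ HasDerivAt v (gradient U (x t)) t)
    (a : V) (haW : a ∈ W)
    (hlim : Tendsto (fun t : ℝ => t⁻¹ • x t) atTop (nhds a)) :
    Tendsto v atTop (nhds a) ∧
    ∀ ε : ℝ, 0 < ε → ∃ t₁ > (0:ℝ), ∃ δ > (0:ℝ),
      (∀ (T : ℝ), 0 < T → ∀ y w : ℝ → V,
        (∀ t ∈ Set.Ico (0:ℝ) T, y t ∈ W ∧
          HasDerivAt y (w t) t ∧ HasDerivAt w (gradient U (y t)) t) →
        ‖y 0 - x 0‖ < δ → ‖w 0 - v 0‖ < δ →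
        ∃ (T' : ℝ) (z wz : ℝ → V), T < T' ∧
          (∀ t ∈ Set.Ico (0:ℝ) T', z t ∈ W ∧
            HasDerivAt z (wz t) t ∧ HasDerivAt wz (gradient U (z t)) t) ∧
          z 0 = y 0 ∧ wz 0 = w 0) ∧
      (∀ y w : ℝ → V,
        (∀ t ∈ Set.Ici (0:ℝ), y t ∈ W ∧
          HasDerivAt y (w t) t ∧ HasDerivAt w (gradient U (y t)) t) →
        ‖y 0 - x 0‖ < δ → ‖w 0 - v 0‖ < δ →
        (∀ t : ℝ, t₁ < t → ‖y t - t • a‖ < t * ε) ∧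
        ∃ b ∈ W, ‖b - a‖ < ε ∧ Tendsto (fun t : ℝ => t⁻¹ • y t) atTop (nhds b)) := by
  classical
  have hxcont : ContinuousOn x (Ici (0:ℝ)) := fun t ht =>
    ((hsol t ht).2.1.continuousAt).continuousWithinAt
  have hvcont : ContinuousOn v (Ici (0:ℝ)) := fun t ht =>
    ((hsol t ht).2.2.continuousAt).continuousWithinAt
  -- radius of a ball around `a` inside `W`
  obtain ⟨r0, hr0, hball0⟩ := Metric.isOpen_iff.mp hW a haW
  set r : ℝ := r0 / 2 with hrdef
  have hrpos : 0 < r := by rw [hrdef]; linarith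
  have hballW : closedBall a r ⊆ W := fun z hz =>
    hball0 (lt_of_le_of_lt (mem_closedBall.mp hz) (by rw [hrdef]; linarith))
  -- bound for the gradient on the ball
  obtain ⟨M0, hM0⟩ := (isCompact_closedBall a r).exists_bound_of_continuousOn
    ((grad_continuousOn hW hU).mono hballW)
  set M : ℝ := max M0 0 with hMdef
  have hM : 0 ≤ M := le_max_right _ _
  -- the cone estimate
  have hMb : ∀ (p : V) (t : ℝ), 0 < t → ‖p - t • a‖ ≤ r * t →
      p ∈ W ∧ ‖gradient U p‖ ≤ M / t ^ 2 := by
    intro p t ht hp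
    have hq : t⁻¹ • p ∈ closedBall a r := by
      rw [mem_closedBall, dist_eq_norm]
      have h1 : t⁻¹ • p - a = t⁻¹ • (p - t • a) := by
        rw [smul_sub, smul_smul, inv_mul_cancel₀ ht.ne', one_smul]
      rw [h1, norm_smul, Real.norm_eq_abs, abs_of_pos (inv_pos.mpr ht)]
      calc t⁻¹ * ‖p - t • a‖ ≤ t⁻¹ * (r * t) :=
            mul_le_mul_of_nonneg_left hp (inv_pos.mpr ht).le
        _ = r := by field_simp
    have hqW : t⁻¹ • p ∈ W := hballW hq
    have hpW : p ∈ W := by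
      have := hWcone _ hqW t ht
      rwa [smul_inv_smul₀ ht.ne'] at this
    refine ⟨hpW, ?_⟩
    have hgs := grad_smul hW hU hhom hqW ht (by rwa [smul_inv_smul₀ ht.ne'])
    rw [smul_inv_smul₀ ht.ne'] at hgs
    rw [hgs, norm_smul, Real.norm_eq_abs, abs_of_pos (inv_pos.mpr (pow_pos ht 2)),
      div_eq_mul_inv, mul_comm M]
    exact mul_le_mul_of_nonneg_left ((hM0 _ hq).trans (le_max_left _ _))
      (inv_pos.mpr (pow_pos ht 2)).le
  -- converting the limit hypothesis into cone bounds
  have hcone_of_lim : ∀ (f : ℝ → V) (b : V) (c : ℝ), 0 < c →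
      Tendsto (fun t : ℝ => t⁻¹ • f t) atTop (nhds b) →
      ∀ᶠ t in atTop, ‖f t - t • b‖ ≤ c * t := by
    intro f b c hc hf
    have h1 : ∀ᶠ t in atTop, dist (t⁻¹ • f t) b ≤ c := by
      obtain ⟨N, hN⟩ := Metric.tendsto_atTop.mp hf c hc
      filter_upwards [eventually_ge_atTop N] with t ht
      exact (hN t ht).le
    filter_upwards [h1, eventually_gt_atTop 0] with t ht ht0
    rw [dist_eq_norm] at ht
    have h2 : f t - t • b = t • (t⁻¹ • f t - b) := by
      rw [smul_sub, smul_inv_smul₀ ht0.ne']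
    rw [h2, norm_smul, Real.norm_eq_abs, abs_of_pos ht0, mul_comm]
    exact mul_le_mul_of_nonneg_right ht ht0.le
  -- Part 1 : the limit of the velocity
  obtain ⟨s₀, hs₀⟩ := eventually_atTop.mp
    ((hcone_of_lim x a r hrpos hlim).and (eventually_gt_atTop 0))
  have hs₀pos : 0 < s₀ ⊔ 1 := lt_of_lt_of_le zero_lt_one (le_max_right _ _)
  have hxgcont : ContinuousOn (fun t => gradient U (x t)) (Ici (s₀ ⊔ 1)) :=
    (grad_continuousOn hW hU).comp
      (hxcont.mono (fun t ht => le_trans hs₀pos.le ht))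
      (fun t ht => (hsol t (le_trans hs₀pos.le ht)).1)
  have hxgb : ∀ t ∈ Ici (s₀ ⊔ 1), ‖gradient U (x t)‖ ≤ M / t ^ 2 := fun t ht =>
    (hMb (x t) t (lt_of_lt_of_le hs₀pos ht)
      (hs₀ t (le_trans (le_max_left _ _) ht)).1).2
  obtain ⟨c, hvc⟩ := vel_limit hs₀pos
    (fun t ht => (hsol t (le_trans hs₀pos.le ht)).2.2) hxgcont hxgb
  have hxc : Tendsto (fun t : ℝ => t⁻¹ • x t) atTop (nhds c) :=
    cesaro (fun t ht => (hsol t (le_trans hs₀pos.le ht)).2.1)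
      (hvcont.mono (fun t ht => le_trans hs₀pos.le ht)) hvc
  have hca : c = a := tendsto_nhds_unique hxc hlim
  rw [hca] at hvc
  refine ⟨hvc, ?_⟩
  intro ε hε
  set ε₁ : ℝ := min ε r with hε₁def
  have hε₁ : 0 < ε₁ := lt_min hε hrpos
  have hε₁ε : ε₁ ≤ ε := min_le_left _ _
  have hε₁r : ε₁ ≤ r := min_le_right _ _
  -- choice of t₁
  have hvev : ∀ᶠ t in atTop, ‖v t - a‖ ≤ ε₁/16 := by
    obtain ⟨N, hN⟩ := Metric.tendsto_atTop.mp hvc (ε₁/16) (by linarith)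
    filter_upwards [eventually_ge_atTop N] with t ht
    rw [← dist_eq_norm]
    exact (hN t ht).le
  obtain ⟨t₀, ht₀⟩ := eventually_atTop.mp
    ((hcone_of_lim x a (ε₁/16) (by linarith) hlim).and hvev)
  set t₁ : ℝ := max (max t₀ 1) (16 * M / ε₁) with ht₁def
  have ht₁1 : (1:ℝ) ≤ t₁ := le_trans (le_max_right t₀ 1) (le_max_left _ _)
  have ht₁0 : (0:ℝ) < t₁ := lt_of_lt_of_le zero_lt_one ht₁1
  have ht₁t₀ : t₀ ≤ t₁ := le_trans (le_max_left t₀ 1) (le_max_left _ _)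
  have hMt₁ : M / t₁ ≤ ε₁ / 16 := by
    rw [div_le_iff₀ ht₁0]
    have h16 : 16 * M / ε₁ ≤ t₁ := le_max_right _ _
    rw [div_le_iff₀ hε₁] at h16
    nlinarith
  have hxt₁ : ∀ t, t₁ ≤ t → ‖x t - t • a‖ ≤ ε₁/16 * t ∧ ‖v t - a‖ ≤ ε₁/16 :=
    fun t ht => ht₀ t (ht₁t₀.trans ht)
  -- the tube around the trajectory on [0, t₁]
  have htrajW : x '' Icc 0 t₁ ⊆ W := by
    rintro p ⟨t, ht, rfl⟩
    exact (hsol t ht.1).1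
  have htrajc : IsCompact (x '' Icc 0 t₁) :=
    (isCompact_Icc).image_of_continuousOn (hxcont.mono Icc_subset_Ici_self)
  obtain ⟨ρ, hρ, hK₃W⟩ := htrajc.exists_cthickening_subset_open hW htrajW
  set K₃ : Set V := Metric.cthickening ρ (x '' Icc 0 t₁) with hK₃def
  have hK₃c : IsCompact K₃ := htrajc.cthickening
  obtain ⟨Lg, hLgbd⟩ := hK₃c.exists_bound_of_continuousOn
    ((fderiv_grad_continuousOn hW hU).mono hK₃W)
  have hLgK : ∀ z ∈ K₃, ‖fderiv ℝ (gradient U) z‖₊ ≤ Lg.toNNReal := by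
    intro z hz
    rw [← NNReal.coe_le_coe, Real.coe_toNNReal']
    exact le_max_of_le_left (hLgbd z hz)
  set LK : ℝ≥0 := max 1 Lg.toNNReal with hLKdef
  have hlip : ∀ t : ℝ, LipschitzOnWith LK (field U)
      (closedBall (x (max 0 (min t t₁)), v (max 0 (min t t₁))) ρ) := by
    intro t
    set ct : ℝ := max 0 (min t t₁) with hct
    have hctI : ct ∈ Icc 0 t₁ := ⟨le_max_left _ _,
      max_le ht₁0.le (min_le_right _ _)⟩
    have hballsub : closedBall (x ct) ρ ⊆ K₃ :=
      closedBall_subset_cthickening (mem_image_of_mem x hctI) ρ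
    have h1 := lip_field hW hU (Lg := Lg.toNNReal) (s := closedBall (x ct) ρ)
      (hballsub.trans hK₃W) (convex_closedBall _ _) (fun z hz => hLgK z (hballsub hz))
    apply h1.mono
    rw [← closedBall_prod_same]
    exact prod_mono_right (subset_univ _)
  -- choice of δ
  set δP : ℝ := min (ρ/2) (ε₁/16) with hδPdef
  have hδP : 0 < δP := lt_min (by linarith) (by linarith)
  have hδPρ : δP ≤ ρ/2 := min_le_left _ _
  have hδPε : δP ≤ ε₁/16 := min_le_right _ _
  set δ : ℝ := (δP/2) * Real.exp (-(LK : ℝ) * t₁) with hδdef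
  have hδ : 0 < δ := mul_pos (by linarith) (Real.exp_pos _)
  have hδe : δ * Real.exp ((LK : ℝ) * t₁) = δP / 2 := by
    rw [hδdef, mul_assoc, ← Real.exp_add, neg_mul, neg_add_cancel, Real.exp_zero, mul_one]
  -- core consequences of the Grönwall estimate on [0, t₁]
  have tubecore : ∀ (y w : ℝ → V) (t₂ : ℝ), t₂ ∈ Icc 0 t₁ →
      (∀ t ∈ Icc 0 t₂, HasDerivAt y (w t) t ∧ HasDerivAt w (gradient U (y t)) t) →
      ‖y 0 - x 0‖ < δ → ‖w 0 - v 0‖ < δ →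
      ∀ t ∈ Icc 0 t₂, dist (y t) (x t) ≤ δP/2 ∧ dist (w t) (v t) ≤ δP/2 := by
    intro y w t₂ ht₂ hsoly hy0 hw0
    have h0 : dist ((y 0), (w 0)) ((x 0), (v 0)) ≤ δ := by
      rw [Prod.dist_eq]
      apply max_le <;> rw [dist_eq_norm]
      exacts [hy0.le, hw0.le]
    have h1 := tube ht₁0.le
      (fun t ht => ⟨(hsol t ht.1).2.1, (hsol t ht.1).2.2⟩) hρ hlip hδ
      (by rw [hδe]; linarith) ht₂ hsoly h0
    intro t ht
    have h2 := h1 t ht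
    rw [hδe, Prod.dist_eq] at h2
    exact ⟨le_trans (le_max_left _ _) h2, le_trans (le_max_right _ _) h2⟩
  -- resulting bounds at time t₁
  have att₁ : ∀ (y w : ℝ → V),
      (∀ t ∈ Icc 0 t₁, HasDerivAt y (w t) t ∧ HasDerivAt w (gradient U (y t)) t) →
      ‖y 0 - x 0‖ < δ → ‖w 0 - v 0‖ < δ →
      ‖y t₁ - t₁ • a‖ ≤ ε₁/8 * t₁ ∧ ‖w t₁ - a‖ ≤ ε₁/8 := by
    intro y w hsoly hy0 hw0
    obtain ⟨h1, h2⟩ := tubecore y w t₁ ⟨ht₁0.le, le_rfl⟩ hsoly hy0 hw0 t₁ ⟨ht₁0.le, le_rfl⟩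
    obtain ⟨hx1, hv1⟩ := hxt₁ t₁ le_rfl
    rw [dist_eq_norm] at h1 h2
    constructor
    · calc ‖y t₁ - t₁ • a‖ ≤ ‖y t₁ - x t₁‖ + ‖x t₁ - t₁ • a‖ := by
            have := norm_add_le (y t₁ - x t₁) (x t₁ - t₁ • a)
            simpa using this
        _ ≤ δP/2 + ε₁/16 * t₁ := add_le_add h1 hx1
        _ ≤ ε₁/8 * t₁ := by nlinarith
    · calc ‖w t₁ - a‖ ≤ ‖w t₁ - v t₁‖ + ‖v t₁ - a‖ := by
            have := norm_add_le (w t₁ - v t₁) (v t₁ - a)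
            simpa using this
        _ ≤ δP/2 + ε₁/16 := add_le_add h2 hv1
        _ ≤ ε₁/8 := by linarith
  have bootcore : ∀ (y w : ℝ → V) (t₂ : ℝ), t₁ ≤ t₂ →
      (∀ t ∈ Icc t₁ t₂, y t ∈ W ∧ HasDerivAt y (w t) t ∧ HasDerivAt w (gradient U (y t)) t) →
      ‖y t₁ - t₁ • a‖ ≤ ε₁/8 * t₁ → ‖w t₁ - a‖ ≤ ε₁/8 →
      ∀ t ∈ Icc t₁ t₂, ‖y t - t • a‖ ≤ 5*ε₁/16 * t ∧ ‖w t - a‖ ≤ 3*ε₁/16 :=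
    fun y w t₂ h hs hy hw =>
      bootstrap hW hU hM (fun p t ht hb => (hMb p t ht hb).2) hε₁ hε₁r ht₁1 hMt₁ h hs hy hw
  refine ⟨t₁, ht₁0, δ, hδ, ?_, ?_⟩
  · -- extension of nearby solutions
    intro T hT y w hsoly hy0 hw0
    obtain ⟨Bv, hBv⟩ := (isCompact_Icc (a := (0:ℝ)) (b := t₁)).exists_bound_of_continuousOn
      (hvcont.mono Icc_subset_Ici_self)
    set CT : Set V := (fun z : ℝ × V => z.1 • a + z.1 • z.2) ''
      ((Icc t₁ (max T t₁)) ×ˢ closedBall (0:V) (ε₁/2)) with hCTdef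
    have hCTc : IsCompact CT := ((isCompact_Icc).prod (isCompact_closedBall _ _)).image
      ((continuous_fst.smul continuous_const).add (continuous_fst.smul continuous_snd))
    have hCTW : CT ⊆ W := by
      rintro p ⟨⟨s, u⟩, ⟨hs, hu⟩, rfl⟩
      have hs0 : (0:ℝ) < s := lt_of_lt_of_le ht₁0 hs.1
      have hau : a + u ∈ closedBall a r := by
        rw [mem_closedBall]
        have : dist (a + u) a = ‖u‖ := by
          rw [dist_eq_norm]
          simp
        rw [this]
        have := mem_closedBall.mp hu
        rw [dist_zero_right] at this
        linarith
      have := hWcone _ (hballW hau) s hs0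
      rwa [smul_add] at this
    set B : ℝ := max (Bv + δP/2) (‖a‖ + 3*ε₁/16) with hBdef
    have hB0 : 0 ≤ B := le_max_of_le_right (by positivity)
    have hmemT : ∀ t ∈ Ico 0 T, y t ∈ K₃ ∪ CT ∧ ‖w t‖ ≤ B := by
      intro t ht
      by_cases htt₁ : t ≤ t₁
      · obtain ⟨h1, h2⟩ := tubecore y w t ⟨ht.1, htt₁⟩
          (fun u hu => ⟨(hsoly u ⟨hu.1, hu.2.trans_lt ht.2⟩).2.1,
            (hsoly u ⟨hu.1, hu.2.trans_lt ht.2⟩).2.2⟩) hy0 hw0 t ⟨ht.1, le_rfl⟩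
        constructor
        · left
          refine closedBall_subset_cthickening
            (mem_image_of_mem x (show t ∈ Icc 0 t₁ from ⟨ht.1, htt₁⟩)) ρ ?_
          rw [mem_closedBall]
          linarith
        · calc ‖w t‖ ≤ ‖v t‖ + dist (w t) (v t) := by
                rw [dist_eq_norm]
                have := norm_add_le (v t) (w t - v t)
                simpa using this
            _ ≤ Bv + δP/2 := add_le_add (hBv t ⟨ht.1, htt₁⟩) h2
            _ ≤ B := le_max_left _ _
      · push_neg at htt₁
        have ht₁T : t₁ < T := htt₁.trans ht.2
        have hz := att₁ y w (fun u hu => ⟨(hsoly u ⟨hu.1, hu.2.trans_lt ht₁T⟩).2.1,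
          (hsoly u ⟨hu.1, hu.2.trans_lt ht₁T⟩).2.2⟩) hy0 hw0
        have hb := bootcore y w t htt₁.le
          (fun u hu => hsoly u ⟨ht₁0.le.trans hu.1, hu.2.trans_lt ht.2⟩)
          hz.1 hz.2 t ⟨htt₁.le, le_rfl⟩
        have ht0 : (0:ℝ) < t := ht₁0.trans htt₁
        constructor
        · right
          refine ⟨(t, t⁻¹ • (y t - t • a)), ⟨⟨htt₁.le, le_max_of_le_left ht.2.le⟩, ?_⟩, ?_⟩
          · rw [mem_closedBall, dist_zero_right, norm_smul, Real.norm_eq_abs,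
              abs_of_pos (inv_pos.mpr ht0)]
            calc t⁻¹ * ‖y t - t • a‖ ≤ t⁻¹ * (5*ε₁/16 * t) :=
                  mul_le_mul_of_nonneg_left hb.1 (inv_pos.mpr ht0).le
              _ = 5*ε₁/16 := by field_simp
              _ ≤ ε₁/2 := by linarith
          · show t • a + t • (t⁻¹ • (y t - t • a)) = y t
            rw [smul_smul, mul_inv_cancel₀ ht0.ne', one_smul]
            abel
        · calc ‖w t‖ ≤ ‖a‖ + ‖w t - a‖ := by
                have := norm_add_le a (w t - a)
                simpa using this
            _ ≤ ‖a‖ + 3*ε₁/16 := by linarith [hb.2]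
            _ ≤ B := le_max_right _ _
    exact extension hW hU hT hsoly (hK₃c.union hCTc) (union_subset hK₃W hCTW) hB0 hmemT
  · -- asymptotics of globally defined nearby solutions
    intro y w hsoly hy0 hw0
    have hz := att₁ y w (fun u hu => ⟨(hsoly u hu.1).2.1, (hsoly u hu.1).2.2⟩) hy0 hw0
    have hbnd : ∀ t, t₁ ≤ t → ‖y t - t • a‖ ≤ 5*ε₁/16 * t ∧ ‖w t - a‖ ≤ 3*ε₁/16 := by
      intro t ht
      exact bootcore y w t ht (fun u hu => hsoly u (ht₁0.le.trans hu.1)) hz.1 hz.2 t ⟨ht, le_rfl⟩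
    constructor
    · intro t ht
      have h1 := (hbnd t ht.le).1
      have ht0 : (0:ℝ) < t := ht₁0.trans ht
      calc ‖y t - t • a‖ ≤ 5*ε₁/16 * t := h1
        _ < t * ε := by nlinarith
    · have hycont : ContinuousOn y (Ici t₁) := fun u hu =>
        ((hsoly u (ht₁0.le.trans hu)).2.1.continuousAt).continuousWithinAt
      have hwcont : ContinuousOn w (Ici t₁) := fun u hu =>
        ((hsoly u (ht₁0.le.trans hu)).2.2.continuousAt).continuousWithinAt
      have hygcont : ContinuousOn (fun u => gradient U (y u)) (Ici t₁) :=
        (grad_continuousOn hW hU).comp hycont (fun u hu => (hsoly u (ht₁0.le.trans hu)).1)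
      have hygb : ∀ u ∈ Ici t₁, ‖gradient U (y u)‖ ≤ M / u ^ 2 := by
        intro u hu
        have h5 := (hbnd u hu).1
        have hu0 : (0:ℝ) < u := lt_of_lt_of_le ht₁0 hu
        refine (hMb (y u) u hu0 (h5.trans ?_)).2
        nlinarith
      obtain ⟨b, hb⟩ := vel_limit ht₁0
        (fun u hu => (hsoly u (ht₁0.le.trans hu)).2.2) hygcont hygb
      have hyb : Tendsto (fun t : ℝ => t⁻¹ • y t) atTop (nhds b) :=
        cesaro (fun u hu => (hsoly u (ht₁0.le.trans hu)).2.1) hwcont hb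
      have hba : ‖b - a‖ ≤ 3*ε₁/16 := by
        apply le_of_tendsto ((hb.sub_const a).norm)
        filter_upwards [eventually_ge_atTop t₁] with t ht
        exact (hbnd t ht).2
      refine ⟨b, ?_, lt_of_le_of_lt hba (by nlinarith), hyb⟩
      apply hballW
      rw [mem_closedBall, dist_eq_norm]
      nlinarith

end ChazyMain

end NBodyHJ
end
end
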